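/- Haiman move compatibility: suppose λ, μ, ν are shapes such that μ extends λ and ν extends λ ∪ μ, and let A, B, T, U be standard tableaux with shape(A) = λ, shape(T) = shape(U) = μ, shape(B) = ν. If T ≡_D U then A ⨿ T ⨿ B ≡_D A ⨿ U ⨿ B. -/

import Mathlib

open scoped Classical

noncomputable section

variable {Λ : Type} [Fintype Λ] [PartialOrder Λ]

/-- The set of boxes occupied by a (partial) filling. -/
def shape (T : Λ → Option ℕ) : Finset Λ :=
  Finset.univ.filter fun x => (T x).isSome

/-- Lower order ideal (straight shape). -/
def IsLowerIdeal (S : Finset Λ) : Prop := ∀ x ∈ S, ∀ y, y ≤ x → y ∈ S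

/-- `T` is a standard filling of a skew shape: its domain is a difference of
nested lower order ideals, its labels are exactly `1,…,m` each used once, and
labels strictly increase along the order of `Λ`. -/
def IsStandard (T : Λ → Option ℕ) : Prop :=
  (∃ lam : Finset Λ, IsLowerIdeal lam ∧ Disjoint lam (shape T) ∧
    IsLowerIdeal (lam ∪ shape T)) ∧
  (∀ i : ℕ, 1 ≤ i → i ≤ (shape T).card → ∃! x : Λ, T x = some i) ∧
  (∀ x ∈ shape T, ∃ i : ℕ, T x = some i ∧ 1 ≤ i ∧ i ≤ (shape T).card) ∧
  (∀ x y : Λ, x ∈ shape T → y ∈ shape T → x < y →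
    ∀ i j : ℕ, T x = some i → T y = some j → i < j)

def lab (T : Λ → Option ℕ) (x : Λ) : ℕ := (T x).getD 0

def pickMinBy (f : Λ → ℕ) (s : Finset Λ) (h : s.Nonempty) : Λ :=
  (Finset.exists_min_image s f h).choose

def pickMaxBy (f : Λ → ℕ) (s : Finset Λ) (h : s.Nonempty) : Λ :=
  (Finset.exists_max_image s f h).choose

/-- One full jeu de taquin slide into the vacant box `x`: repeatedly move into the
vacancy the smallest label among the boxes covering it. -/
def slideAux : ℕ → (Λ → Option ℕ) → Λ → (Λ → Option ℕ)
  | 0, T, _ => T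
  | n+1, T, x =>
    let cands := (shape T).filter fun y => x ⋖ y
    if h : cands.Nonempty then
      let y := pickMinBy (lab T) cands h
      slideAux n (fun z => if z = x then T y else if z = y then none else T z) y
    else T

/-- One full reverse jeu de taquin slide into the vacant box `x`: repeatedly move
into the vacancy the largest label among the boxes it covers. -/
def revSlideAux : ℕ → (Λ → Option ℕ) → Λ → (Λ → Option ℕ)
  | 0, T, _ => T
  | n+1, T, x =>
    let cands := (shape T).filter fun y => y ⋖ x
    if h : cands.Nonempty then
      let y := pickMaxBy (lab T) cands h
      revSlideAux n (fun z => if z = x then T y else if z = y then none else T z) y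
    else T

/-- `x` is an admissible box for an (inner) jeu de taquin slide on `T`:
vacant, below some box of `T`, and maximal such. -/
def InnerAdmissible (T : Λ → Option ℕ) (x : Λ) : Prop :=
  T x = none ∧ (∃ y ∈ shape T, x < y) ∧
  ∀ z : Λ, T z = none → (∃ y ∈ shape T, z < y) → ¬ x < z

/-- `x` is an admissible box for a reverse jeu de taquin slide on `T`:
vacant, above some box of `T`, and minimal such. -/
def OuterAdmissible (T : Λ → Option ℕ) (x : Λ) : Prop :=
  T x = none ∧ (∃ y ∈ shape T, y < x) ∧
  ∀ z : Λ, T z = none → (∃ y ∈ shape T, y < z) → ¬ z < x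

def jdt (x : Λ) (T : Λ → Option ℕ) : Λ → Option ℕ :=
  if InnerAdmissible T x then slideAux (Fintype.card Λ) T x else T

def revjdt (x : Λ) (T : Λ → Option ℕ) : Λ → Option ℕ :=
  if OuterAdmissible T x then revSlideAux (Fintype.card Λ) T x else T

/-- Apply a sequence of slides (`true`) and reverse slides (`false`) at the
given boxes. -/
def applySeq (s : List (Bool × Λ)) (T : Λ → Option ℕ) : Λ → Option ℕ :=
  s.foldl (fun T p => if p.1 then jdt p.2 T else revjdt p.2 T) T

/-- Dual equivalence: same shape, and every common sequence of slides and
reverse slides produces tableaux of the same shape. -/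
def DualEquiv (T U : Λ → Option ℕ) : Prop :=
  shape T = shape U ∧
  ∀ s : List (Bool × Λ), shape (applySeq s T) = shape (applySeq s U)

/-- `mu` extends `lam`: `lam ∪ mu` is a straight shape containing `lam` and `mu`
as complementary down-closed and up-closed subsets. -/
def ShapeExtends (mu lam : Finset Λ) : Prop :=
  Disjoint lam mu ∧ IsLowerIdeal (lam ∪ mu) ∧
  (∀ x ∈ lam, ∀ y ∈ lam ∪ mu, y ≤ x → y ∈ lam) ∧
  (∀ x ∈ mu, ∀ y ∈ lam ∪ mu, x ≤ y → y ∈ mu)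

/-- `A ⨿ B`: keep the labels of `A` and shift the labels of `B` up by `|shape A|`. -/
def tabConcat (A B : Λ → Option ℕ) : Λ → Option ℕ := fun x =>
  match A x with
  | some i => some i
  | none => (B x).map (· + (shape A).card)

/-- One step of infusion on a triple `(T, U, V)`: remove the largest label of `T`
at its box `x`, slide `U` into `x`, and record the removed label at the vacated
hole in `V`. -/
def infusionStep :
    ((Λ → Option ℕ) × (Λ → Option ℕ) × (Λ → Option ℕ)) →
    ((Λ → Option ℕ) × (Λ → Option ℕ) × (Λ → Option ℕ)) := fun p =>
  let T := p.1; let U := p.2.1; let V := p.2.2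
  if h : (shape T).Nonempty then
    let x := pickMaxBy (lab T) (shape T) h
    let T' := fun z => if z = x then none else T z
    let U' := slideAux (Fintype.card Λ) U x
    let hole := if h2 : (shape U \ shape U').Nonempty then h2.choose else x
    let V' := fun z => if z = hole then T x else V z
    (T', U', V')
  else p

/-- `infusion (T,U)` for `U` extending `T`: slide `U` through the boxes of `T` in
decreasing label order; first output is the slid `U`, second records `T`'s labels
in the vacated holes. -/
def infusion (T U : Λ → Option ℕ) : (Λ → Option ℕ) × (Λ → Option ℕ) :=
  let r := infusionStep^[Fintype.card Λ] (T, U, fun _ => none)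
  (r.2.1, r.2.2)

/-- One step of reverse infusion: remove the smallest label of `U` at its box `x`,
reverse-slide `T` into `x`, and record the removed label at the vacated hole. -/
def revinfusionStep :
    ((Λ → Option ℕ) × (Λ → Option ℕ) × (Λ → Option ℕ)) →
    ((Λ → Option ℕ) × (Λ → Option ℕ) × (Λ → Option ℕ)) := fun p =>
  let T := p.1; let U := p.2.1; let V := p.2.2
  if h : (shape U).Nonempty then
    let x := pickMinBy (lab U) (shape U) h
    let U' := fun z => if z = x then none else U z
    let T' := revSlideAux (Fintype.card Λ) T x
    let hole := if h2 : (shape T \ shape T').Nonempty then h2.choose else x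
    let V' := fun z => if z = hole then U x else V z
    (T', U', V')
  else p

/-- `revinfusion (T,U)`: reverse-slide `T` through the boxes of `U` in increasing
label order; first output records `U`'s labels in the vacated holes (a straight
tableau), second is the migrated `T`. -/
def revinfusion (T U : Λ → Option ℕ) : (Λ → Option ℕ) × (Λ → Option ℕ) :=
  let r := revinfusionStep^[Fintype.card Λ] (T, U, fun _ => none)
  (r.2.2, r.1)

def applyJdtSeq (l : List Λ) (T : Λ → Option ℕ) : Λ → Option ℕ :=
  l.foldl (fun T x => jdt x T) T

/-- `V` is a rectification of `T`: obtained from `T` by jeu de taquin slides and of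
straight shape. -/
def IsRectificationOf (V T : Λ → Option ℕ) : Prop :=
  (∃ l : List Λ, applyJdtSeq l T = V) ∧ IsLowerIdeal (shape V)

/-- The rectification of `T` (any choice of rectifying slide sequence). -/
def rect (T : Λ → Option ℕ) : Λ → Option ℕ :=
  if h : ∃ l : List Λ, IsLowerIdeal (shape (applyJdtSeq l T)) then
    applyJdtSeq h.choose T else T

/-- Sch\"utzenberger's `Δ`: delete the entry `1` at the minimum `b`, decrease all
labels by one, and slide into `b`. -/
def delta (b : Λ) (T : Λ → Option ℕ) : Λ → Option ℕ :=
  slideAux (Fintype.card Λ) (fun x => if x = b then none else (T x).map (· - 1)) b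

/-- Evacuation: the label of `x` is `|λ|+1-i` where `x ∈ shape (Δ^[i-1] T) \ shape (Δ^[i] T)`. -/
def evac (b : Λ) (T : Λ → Option ℕ) : Λ → Option ℕ := fun x =>
  if x ∈ shape T then
    some ((shape T).card + 1 -
      ((Finset.range (shape T).card).filter fun j => x ∈ shape ((delta b)^[j] T)).card)
  else none

/-- The shapes lying one box above `γ` and inside `β`. -/
def Between (γ β : Finset Λ) : Set (Finset Λ) :=
  {ε | IsLowerIdeal ε ∧ γ ⊆ ε ∧ ε ⊆ β ∧ ε.card = γ.card + 1}

/-- The local growth rule for a 2×2 square with corners `α` (top-left), `β`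
(top-right), `γ` (bottom-left), `δ` (bottom-right). -/
def LocalRule (α β γ δ : Finset Λ) : Prop :=
  δ ∈ Between γ β ∧ (δ = α ↔ Between γ β = {α})

/-- A `(p+1) × (q+1)` growth diagram (rows indexed from the top). -/
def IsGrowthDiagram (p q : ℕ) (g : ℕ → ℕ → Finset Λ) : Prop :=
  (∀ i j, i ≤ p → j ≤ q → IsLowerIdeal (g i j)) ∧
  (∀ i j, i ≤ p → j < q → g i j ⊆ g i (j+1) ∧ (g i (j+1)).card = (g i j).card + 1) ∧
  (∀ i j, i < p → j ≤ q → g (i+1) j ⊆ g i j ∧ (g i j).card = (g (i+1) j).card + 1) ∧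
  (∀ i j, i < p → j < q → LocalRule (g i j) (g i (j+1)) (g (i+1) j) (g (i+1) (j+1)))

/-- The tableau of shape `{x₁,…,x_p}` encoding a slide sequence: `x_i` gets label `p+1-i`. -/
def encodeTab (l : List Λ) : Λ → Option ℕ := fun x =>
  if x ∈ l then some (l.length - l.findIdx (fun y => decide (y = x))) else none

end

set_option linter.unusedSectionVars false
set_option linter.unusedVariables false
set_option maxHeartbeats 1000000

noncomputable section

variable {Λ : Type} [Fintype Λ] [PartialOrder Λ]

-- basic lemmas
lemma mem_shape_iff {T : Λ → Option ℕ} {x : Λ} : x ∈ shape T ↔ ∃ i, T x = some i := by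
  simp [shape, Option.isSome_iff_exists]

lemma not_mem_shape_iff {T : Λ → Option ℕ} {x : Λ} : x ∉ shape T ↔ T x = none := by
  rw [mem_shape_iff]; cases h : T x <;> simp [h]

lemma pickMinBy_spec (f : Λ → ℕ) (s : Finset Λ) (h : s.Nonempty) :
    pickMinBy f s h ∈ s ∧ ∀ b ∈ s, f (pickMinBy f s h) ≤ f b :=
  (Finset.exists_min_image s f h).choose_spec

lemma pickMaxBy_spec (f : Λ → ℕ) (s : Finset Λ) (h : s.Nonempty) :
    pickMaxBy f s h ∈ s ∧ ∀ b ∈ s, f b ≤ f (pickMaxBy f s h) :=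
  (Finset.exists_max_image s f h).choose_spec

lemma exists_covBy_le {x z : Λ} (h : x < z) : ∃ w, x ⋖ w ∧ w ≤ z := by
  obtain ⟨m, hm, hmin⟩ := (by
    obtain ⟨m, hm⟩ := Finset.exists_minimal (s := Finset.univ.filter fun w => x < w ∧ w ≤ z) ⟨z, by simp [h]⟩
    exact ⟨m, hm.1, fun c hc hlt => lt_irrefl _ (lt_of_lt_of_le hlt (hm.2 hc hlt.le))⟩ :
    ∃ m ∈ (Finset.univ.filter fun w => x < w ∧ w ≤ z), ∀ c ∈ (Finset.univ.filter fun w => x < w ∧ w ≤ z), ¬ c < m)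
  simp only [Finset.mem_filter, Finset.mem_univ, true_and] at hm hmin
  refine ⟨m, ⟨hm.1, fun c hc1 hc2 => ?_⟩, hm.2⟩
  exact hmin c ⟨hc1, le_of_lt (lt_of_lt_of_le hc2 hm.2)⟩ hc2

lemma exists_le_covBy {x z : Λ} (h : z < x) : ∃ w, z ≤ w ∧ w ⋖ x := by
  obtain ⟨m, hm, hmax⟩ := (by
    obtain ⟨m, hm⟩ := Finset.exists_maximal (s := Finset.univ.filter fun w => w < x ∧ z ≤ w) ⟨z, by simp [h]⟩
    exact ⟨m, hm.1, fun c hc hlt => lt_irrefl _ (lt_of_lt_of_le hlt (hm.2 hc hlt.le))⟩ :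
    ∃ m ∈ (Finset.univ.filter fun w => w < x ∧ z ≤ w), ∀ c ∈ (Finset.univ.filter fun w => w < x ∧ z ≤ w), ¬ m < c)
  simp only [Finset.mem_filter, Finset.mem_univ, true_and] at hm hmax
  refine ⟨m, hm.2, ⟨hm.1, fun c hc1 hc2 => ?_⟩⟩
  exact hmax c ⟨hc2, le_of_lt (lt_of_le_of_lt hm.2 hc1)⟩ hc1

/-- candidate set for an inner slide step -/
def candI (S : Λ → Option ℕ) (h : Λ) : Finset Λ := (shape S).filter fun y => h ⋖ y
/-- candidate set for a reverse slide step -/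
def candO (S : Λ → Option ℕ) (h : Λ) : Finset Λ := (shape S).filter fun y => y ⋖ h

/-- the state after one inner micro-step -/
def stepI (S : Λ → Option ℕ) (h y : Λ) : Λ → Option ℕ :=
  fun z => if z = h then S y else if z = y then none else S z

lemma slideAux_succ' (n : ℕ) (T : Λ → Option ℕ) (x : Λ) :
    slideAux (n+1) T x =
      if h : (candI T x).Nonempty then
        slideAux n (stepI T x (pickMinBy (lab T) (candI T x) h)) (pickMinBy (lab T) (candI T x) h)
      else T := rfl

lemma revSlideAux_succ' (n : ℕ) (T : Λ → Option ℕ) (x : Λ) :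
    revSlideAux (n+1) T x =
      if h : (candO T x).Nonempty then
        revSlideAux n (stepI T x (pickMaxBy (lab T) (candO T x) h)) (pickMaxBy (lab T) (candO T x) h)
      else T := rfl

lemma slideAux_zero (T : Λ → Option ℕ) (x : Λ) : slideAux 0 T x = T := rfl
lemma revSlideAux_zero (T : Λ → Option ℕ) (x : Λ) : revSlideAux 0 T x = T := rfl

/-- number of elements strictly above x -/
def ubI (x : Λ) : ℕ := (Finset.univ.filter fun z => x < z).card
def ubO (x : Λ) : ℕ := (Finset.univ.filter fun z => z < x).card

lemma ubI_lt {x y : Λ} (hxy : x < y) : ubI y < ubI x := by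
  apply Finset.card_lt_card
  constructor
  · intro z hz; simp only [Finset.mem_filter, Finset.mem_univ, true_and] at hz ⊢
    exact lt_trans hxy hz
  · intro hsub
    have := hsub (by simp [Finset.mem_filter, hxy] : y ∈ Finset.univ.filter fun z => x < z)
    simp only [Finset.mem_filter, Finset.mem_univ, true_and] at this
    exact lt_irrefl y this

lemma ubO_lt {x y : Λ} (hxy : y < x) : ubO y < ubO x := by
  apply Finset.card_lt_card
  constructor
  · intro z hz; simp only [Finset.mem_filter, Finset.mem_univ, true_and] at hz ⊢
    exact lt_trans hz hxy
  · intro hsub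
    have := hsub (by simp [Finset.mem_filter, hxy] : y ∈ Finset.univ.filter fun z => z < x)
    simp only [Finset.mem_filter, Finset.mem_univ, true_and] at this
    exact lt_irrefl y this

lemma slideAux_stable : ∀ (k n m : ℕ) (T : Λ → Option ℕ) (x : Λ), ubI x ≤ k → k ≤ n → k ≤ m →
    slideAux n T x = slideAux m T x := by
  intro k
  induction k with
  | zero =>
    intro n m T x hub _ _
    have hc : ¬ (candI T x).Nonempty := by
      rintro ⟨y, hy⟩
      simp only [candI, Finset.mem_filter] at hy
      have : y ∈ Finset.univ.filter fun z => x < z := by simp [hy.2.lt]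
      have := Finset.card_pos.mpr ⟨y, this⟩
      simp only [ubI] at hub; omega
    cases n <;> cases m <;> simp [slideAux_zero, slideAux_succ', hc]
  | succ k ih =>
    intro n m T x hub hn hm
    by_cases hc : (candI T x).Nonempty
    · obtain ⟨n, rfl⟩ : ∃ n', n = n' + 1 := ⟨n - 1, by omega⟩
      obtain ⟨m, rfl⟩ : ∃ m', m = m' + 1 := ⟨m - 1, by omega⟩
      rw [slideAux_succ', slideAux_succ', dif_pos hc, dif_pos hc]
      set y := pickMinBy (lab T) (candI T x) hc with hy
      have hxy : x < y := by
        have := (pickMinBy_spec (lab T) (candI T x) hc).1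
        simp only [candI, Finset.mem_filter] at this
        exact this.2.lt
      have hub' : ubI y ≤ k := by have := ubI_lt hxy; omega
      exact ih n m _ y hub' (by omega) (by omega)
    · cases n <;> cases m <;> simp [slideAux_zero, slideAux_succ', hc]

lemma revSlideAux_stable : ∀ (k n m : ℕ) (T : Λ → Option ℕ) (x : Λ), ubO x ≤ k → k ≤ n → k ≤ m →
    revSlideAux n T x = revSlideAux m T x := by
  intro k
  induction k with
  | zero =>
    intro n m T x hub _ _
    have hc : ¬ (candO T x).Nonempty := by
      rintro ⟨y, hy⟩
      simp only [candO, Finset.mem_filter] at hy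
      have : y ∈ Finset.univ.filter fun z => z < x := by simp [hy.2.lt]
      have := Finset.card_pos.mpr ⟨y, this⟩
      simp only [ubO] at hub; omega
    cases n <;> cases m <;> simp [revSlideAux_zero, revSlideAux_succ', hc]
  | succ k ih =>
    intro n m T x hub hn hm
    by_cases hc : (candO T x).Nonempty
    · obtain ⟨n, rfl⟩ : ∃ n', n = n' + 1 := ⟨n - 1, by omega⟩
      obtain ⟨m, rfl⟩ : ∃ m', m = m' + 1 := ⟨m - 1, by omega⟩
      rw [revSlideAux_succ', revSlideAux_succ', dif_pos hc, dif_pos hc]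
      set y := pickMaxBy (lab T) (candO T x) hc with hy
      have hxy : y < x := by
        have := (pickMaxBy_spec (lab T) (candO T x) hc).1
        simp only [candO, Finset.mem_filter] at this
        exact this.2.lt
      have hub' : ubO y ≤ k := by have := ubO_lt hxy; omega
      exact ih n m _ y hub' (by omega) (by omega)
    · cases n <;> cases m <;> simp [revSlideAux_zero, revSlideAux_succ', hc]

/-- fuel-normalized full inner slide -/
def slideF (T : Λ → Option ℕ) (x : Λ) : Λ → Option ℕ := slideAux (ubI x) T x
def revSlideF (T : Λ → Option ℕ) (x : Λ) : Λ → Option ℕ := revSlideAux (ubO x) T x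

lemma slideF_eq (n : ℕ) (T : Λ → Option ℕ) (x : Λ) (hn : ubI x ≤ n) :
    slideAux n T x = slideF T x :=
  slideAux_stable (ubI x) n (ubI x) T x le_rfl hn le_rfl

lemma revSlideF_eq (n : ℕ) (T : Λ → Option ℕ) (x : Λ) (hn : ubO x ≤ n) :
    revSlideAux n T x = revSlideF T x :=
  revSlideAux_stable (ubO x) n (ubO x) T x le_rfl hn le_rfl

lemma ubI_le_card (x : Λ) : ubI x ≤ Fintype.card Λ := by
  simpa [ubI] using Finset.card_filter_le Finset.univ fun z => x < z

lemma ubO_le_card (x : Λ) : ubO x ≤ Fintype.card Λ := by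
  simpa [ubO] using Finset.card_filter_le Finset.univ fun z => z < x

lemma slideF_empty {T : Λ → Option ℕ} {x : Λ} (hc : ¬ (candI T x).Nonempty) :
    slideF T x = T := by
  unfold slideF; cases h : ubI x <;> simp [slideAux_zero, slideAux_succ', hc]

lemma revSlideF_empty {T : Λ → Option ℕ} {x : Λ} (hc : ¬ (candO T x).Nonempty) :
    revSlideF T x = T := by
  unfold revSlideF; cases h : ubO x <;> simp [revSlideAux_zero, revSlideAux_succ', hc]

lemma slideF_step {T : Λ → Option ℕ} {x : Λ} (hc : (candI T x).Nonempty) :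
    slideF T x = slideF (stepI T x (pickMinBy (lab T) (candI T x) hc)) (pickMinBy (lab T) (candI T x) hc) := by
  set y := pickMinBy (lab T) (candI T x) hc with hy
  have hxy : x < y := by
    have := (pickMinBy_spec (lab T) (candI T x) hc).1
    simp only [candI, Finset.mem_filter] at this
    exact this.2.lt
  have h1 : ubI y < ubI x := ubI_lt hxy
  have h2 : 1 ≤ ubI x := by omega
  obtain ⟨n, hn⟩ : ∃ n, ubI x = n + 1 := ⟨ubI x - 1, by omega⟩
  unfold slideF
  rw [hn, slideAux_succ', dif_pos hc, ← hy]
  exact slideAux_stable (ubI y) n (ubI y) _ y le_rfl (by omega) le_rfl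

lemma revSlideF_step {T : Λ → Option ℕ} {x : Λ} (hc : (candO T x).Nonempty) :
    revSlideF T x = revSlideF (stepI T x (pickMaxBy (lab T) (candO T x) hc)) (pickMaxBy (lab T) (candO T x) hc) := by
  set y := pickMaxBy (lab T) (candO T x) hc with hy
  have hxy : y < x := by
    have := (pickMaxBy_spec (lab T) (candO T x) hc).1
    simp only [candO, Finset.mem_filter] at this
    exact this.2.lt
  have h1 : ubO y < ubO x := ubO_lt hxy
  have h2 : 1 ≤ ubO x := by omega
  obtain ⟨n, hn⟩ : ∃ n, ubO x = n + 1 := ⟨ubO x - 1, by omega⟩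
  unfold revSlideF
  rw [hn, revSlideAux_succ', dif_pos hc, ← hy]
  exact revSlideAux_stable (ubO y) n (ubO y) _ y le_rfl (by omega) le_rfl

def midOf (a m : ℕ) (P : Λ → Option ℕ) : Λ → Option ℕ :=
  fun x => (P x).bind fun i => if a < i ∧ i ≤ a + m then some (i - a) else none

def outOf (a m : ℕ) (P : Λ → Option ℕ) : Λ → Option ℕ :=
  fun x => (P x).bind fun i => if a < i ∧ i ≤ a + m then none else some i

def Inc (P : Λ → Option ℕ) : Prop :=
  ∀ ⦃x y : Λ⦄ ⦃i j : ℕ⦄, x < y → P x = some i → P y = some j → i < j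

def InjL (P : Λ → Option ℕ) : Prop :=
  ∀ ⦃x y : Λ⦄ ⦃i : ℕ⦄, P x = some i → P y = some i → x = y

/-- Single-tableau invariant along an inner slide started at an admissible `x₀`. -/
def SGoodI (P₀ : Λ → Option ℕ) (x₀ : Λ) (S : Λ → Option ℕ) (h : Λ) : Prop :=
  S h = none ∧ x₀ ≤ h ∧ (∀ z, ¬ z ≤ h → S z = P₀ z) ∧ Inc S ∧ InjL S

/-- Single-tableau invariant along a reverse slide started at an admissible `x₀`. -/
def SGoodO (P₀ : Λ → Option ℕ) (x₀ : Λ) (S : Λ → Option ℕ) (h : Λ) : Prop :=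
  S h = none ∧ h ≤ x₀ ∧ (∀ z, ¬ h ≤ z → S z = P₀ z) ∧ Inc S ∧ InjL S

lemma mem_candI {S : Λ → Option ℕ} {h y : Λ} :
    y ∈ candI S h ↔ y ∈ shape S ∧ h ⋖ y := by simp [candI]

lemma mem_candO {S : Λ → Option ℕ} {h y : Λ} :
    y ∈ candO S h ↔ y ∈ shape S ∧ y ⋖ h := by simp [candO]

lemma noVacI {P₀ S : Λ → Option ℕ} {x₀ h : Λ} (HP : InnerAdmissible P₀ x₀)
    (G : SGoodI P₀ x₀ S h) {w v : Λ} (hw : h < w) (hwv : w < v)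
    (hSw : S w = none) (hv : v ∈ shape S) : False := by
  have hPw : P₀ w = none := by
    rw [← G.2.2.1 w (fun hle => absurd (lt_of_lt_of_le hw hle) (lt_irrefl h))]; exact hSw
  have hPv : P₀ v = S v := (G.2.2.1 v (fun hle => absurd (lt_of_lt_of_le (hw.trans hwv) hle) (lt_irrefl h))).symm
  have hvP : v ∈ shape P₀ := by
    rw [mem_shape_iff] at hv ⊢; obtain ⟨i, hi⟩ := hv; exact ⟨i, by rw [hPv, hi]⟩
  exact HP.2.2 w hPw ⟨v, hvP, hwv⟩ (lt_of_le_of_lt G.2.1 hw)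

lemma noVacO {P₀ S : Λ → Option ℕ} {x₀ h : Λ} (HP : OuterAdmissible P₀ x₀)
    (G : SGoodO P₀ x₀ S h) {w v : Λ} (hw : w < h) (hvw : v < w)
    (hSw : S w = none) (hv : v ∈ shape S) : False := by
  have hPw : P₀ w = none := by
    rw [← G.2.2.1 w (fun hle => absurd (lt_of_le_of_lt hle hw) (lt_irrefl h))]; exact hSw
  have hPv : P₀ v = S v := (G.2.2.1 v (fun hle => absurd (lt_of_le_of_lt hle (hvw.trans hw)) (lt_irrefl h))).symm
  have hvP : v ∈ shape P₀ := by
    rw [mem_shape_iff] at hv ⊢; obtain ⟨i, hi⟩ := hv; exact ⟨i, by rw [hPv, hi]⟩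
  exact HP.2.2 w hPw ⟨v, hvP, hvw⟩ (lt_of_lt_of_le hw G.2.1)

lemma stepI_some {S : Λ → Option ℕ} {h y z : Λ} {i : ℕ} (hne : h ≠ y)
    (hz : stepI S h y z = some i) :
    (z = h ∧ S y = some i) ∨ (z ≠ h ∧ z ≠ y ∧ S z = some i) := by
  by_cases h1 : z = h
  · left; exact ⟨h1, by simpa [stepI, h1] using hz⟩
  · by_cases h2 : z = y
    · subst h2; simp [stepI, h1] at hz
    · right; exact ⟨h1, h2, by simpa [stepI, h1, h2] using hz⟩

lemma stepI_shape {S : Λ → Option ℕ} {h y : Λ} (hy : y ∈ shape S) (hSh : S h = none)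
    (hne : h ≠ y) : shape (stepI S h y) = insert h ((shape S).erase y) := by
  ext z
  rw [mem_shape_iff]
  by_cases h1 : z = h
  · subst h1
    constructor
    · intro _; exact Finset.mem_insert_self _ _
    · intro _
      obtain ⟨i, hi⟩ := mem_shape_iff.mp hy
      exact ⟨i, by simp [stepI, hi]⟩
  · by_cases h2 : z = y
    · subst h2
      simp [stepI, h1, hne, Finset.mem_insert, Ne.symm h1]
    · simp only [stepI, if_neg h1, if_neg h2, Finset.mem_insert, Finset.mem_erase]
      rw [← mem_shape_iff]
      constructor
      · intro hh; exact Or.inr ⟨h2, hh⟩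
      · rintro (rfl | ⟨_, hh⟩); exact absurd rfl h1; exact hh

lemma stepGoodI {P₀ S : Λ → Option ℕ} {x₀ h : Λ} (HP : InnerAdmissible P₀ x₀)
    (G : SGoodI P₀ x₀ S h) (hc : (candI S h).Nonempty) :
    SGoodI P₀ x₀ (stepI S h (pickMinBy (lab S) (candI S h) hc))
      (pickMinBy (lab S) (candI S h) hc) := by
  set y := pickMinBy (lab S) (candI S h) hc with hydef
  obtain ⟨hymem, hymin⟩ := pickMinBy_spec (lab S) (candI S h) hc
  rw [← hydef] at hymem hymin
  rw [mem_candI] at hymem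
  obtain ⟨hyS, hcov⟩ := hymem
  have hhy : h < y := hcov.lt
  have hne : h ≠ y := ne_of_lt hhy
  obtain ⟨ly, hly⟩ := mem_shape_iff.mp hyS
  have hlably : lab S y = ly := by simp [lab, hly]
  refine ⟨by simp [stepI, hne, Ne.symm hne], le_of_lt (lt_of_le_of_lt G.2.1 hhy), ?_, ?_, ?_⟩
  · intro z hz
    have hz1 : z ≠ h := fun he => hz (he ▸ le_of_lt hhy)
    have hz2 : z ≠ y := fun he => hz (he ▸ le_rfl)
    have hz3 : ¬ z ≤ h := fun hle => hz (hle.trans (le_of_lt hhy))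
    simp only [stepI, if_neg hz1, if_neg hz2]
    exact G.2.2.1 z hz3
  · -- Inc
    intro u v i j huv hu hv
    rcases stepI_some hne hu with ⟨heu, hu'⟩ | ⟨hu1, hu2, hu'⟩
    · rw [heu] at huv
      rw [heu] at hu; clear heu
      -- u = h, i = ly
      have hiy : i = ly := by rw [hly] at hu'; exact (Option.some_inj.mp hu').symm
      subst hiy
      rcases stepI_some hne hv with ⟨hev, _⟩ | ⟨hv1, hv2, hv'⟩
      · exact absurd (hev ▸ huv) (lt_irrefl _)
      · -- v ≠ h, y; S v = some j; h < v
        by_cases hyv : y ≤ v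
        · have : y < v := lt_of_le_of_ne hyv (fun he => hv2 he.symm)
          exact G.2.2.2.1 this hly hv'
        · obtain ⟨w, hwcov, hwle⟩ := exists_covBy_le huv
          cases hSw : S w with
          | some lw =>
            have hwc : w ∈ candI S h := mem_candI.mpr ⟨mem_shape_iff.mpr ⟨lw, hSw⟩, hwcov⟩
            have hmin := hymin w hwc
            rw [hlably] at hmin
            have hlw : lab S w = lw := by simp [lab, hSw]
            rw [hlw] at hmin
            rcases eq_or_lt_of_le hwle with rfl | hwv
            · have : lw = j := by rw [hSw] at hv'; exact Option.some_inj.mp hv'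
              subst this
              rcases eq_or_lt_of_le hmin with he | hlt
              · exact absurd (G.2.2.2.2 hly (he ▸ hSw)) (fun hyw => hv2 hyw.symm)
              · exact hlt
            · exact lt_of_le_of_lt hmin (G.2.2.2.1 hwv hSw hv')
          | none =>
            have hwv : w < v := lt_of_le_of_ne hwle (fun he => by
              rw [he] at hSw; rw [hSw] at hv'; exact nomatch hv')
            exact absurd (noVacI HP G hwcov.lt hwv hSw (mem_shape_iff.mpr ⟨j, hv'⟩)) id
    · -- u ≠ h, y
      rcases stepI_some hne hv with ⟨hev, hv'⟩ | ⟨hv1, hv2, hv'⟩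
      · rw [hev] at huv
        rw [hev] at hv; clear hev
        -- v = h : j = ly; u < h < y
        have hjy : j = ly := by rw [hly] at hv'; exact (Option.some_inj.mp hv').symm
        subst hjy
        exact G.2.2.2.1 (huv.trans hhy) hu' hly
      · exact G.2.2.2.1 huv hu' hv'
  · -- InjL
    intro u v i hu hv
    rcases stepI_some hne hu with ⟨heu, hu'⟩ | ⟨hu1, hu2, hu'⟩ <;>
      rcases stepI_some hne hv with ⟨hev, hv'⟩ | ⟨hv1, hv2, hv'⟩
    · rw [heu, hev]
    · exact absurd (G.2.2.2.2 hv' hu') hv2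
    · exact absurd (G.2.2.2.2 hu' hv') hu2
    · exact G.2.2.2.2 hu' hv'

lemma stepGoodO {P₀ S : Λ → Option ℕ} {x₀ h : Λ} (HP : OuterAdmissible P₀ x₀)
    (G : SGoodO P₀ x₀ S h) (hc : (candO S h).Nonempty) :
    SGoodO P₀ x₀ (stepI S h (pickMaxBy (lab S) (candO S h) hc))
      (pickMaxBy (lab S) (candO S h) hc) := by
  set y := pickMaxBy (lab S) (candO S h) hc with hydef
  obtain ⟨hymem, hymax⟩ := pickMaxBy_spec (lab S) (candO S h) hc
  rw [← hydef] at hymem hymax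
  rw [mem_candO] at hymem
  obtain ⟨hyS, hcov⟩ := hymem
  have hhy : y < h := hcov.lt
  have hne : h ≠ y := ne_of_gt hhy
  obtain ⟨ly, hly⟩ := mem_shape_iff.mp hyS
  have hlably : lab S y = ly := by simp [lab, hly]
  refine ⟨by simp [stepI, hne, Ne.symm hne], le_of_lt (lt_of_lt_of_le hhy G.2.1), ?_, ?_, ?_⟩
  · intro z hz
    have hz1 : z ≠ h := fun he => hz (he ▸ le_of_lt hhy)
    have hz2 : z ≠ y := fun he => hz (he ▸ le_rfl)
    have hz3 : ¬ h ≤ z := fun hle => hz ((le_of_lt hhy).trans hle)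
    simp only [stepI, if_neg hz1, if_neg hz2]
    exact G.2.2.1 z hz3
  · -- Inc
    intro u v i j huv hu hv
    rcases stepI_some hne hv with ⟨hev, hv'⟩ | ⟨hv1, hv2, hv'⟩
    · rw [hev] at huv
      rw [hev] at hv; clear hev
      -- v = h, j = ly
      have hjy : j = ly := by rw [hly] at hv'; exact (Option.some_inj.mp hv').symm
      subst hjy
      rcases stepI_some hne hu with ⟨heu, _⟩ | ⟨hu1, hu2, hu'⟩
      · exact absurd (heu ▸ huv) (lt_irrefl _)
      · by_cases hyu : u ≤ y
        · have : u < y := lt_of_le_of_ne hyu hu2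
          exact G.2.2.2.1 this hu' hly
        · obtain ⟨w, hwle, hwcov⟩ := exists_le_covBy huv
          cases hSw : S w with
          | some lw =>
            have hwc : w ∈ candO S h := mem_candO.mpr ⟨mem_shape_iff.mpr ⟨lw, hSw⟩, hwcov⟩
            have hmax := hymax w hwc
            rw [hlably] at hmax
            have hlw : lab S w = lw := by simp [lab, hSw]
            rw [hlw] at hmax
            rcases eq_or_lt_of_le hwle with rfl | huw
            · have : lw = i := by rw [hSw] at hu'; exact Option.some_inj.mp hu'
              subst this
              rcases eq_or_lt_of_le hmax with he | hlt
              · exact absurd (G.2.2.2.2 (he ▸ hSw) hly) hu2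
              · exact hlt
            · exact lt_of_lt_of_le (G.2.2.2.1 huw hu' hSw) hmax
          | none =>
            have huw : u < w := lt_of_le_of_ne hwle (fun he => by
              rw [← he] at hSw; rw [hSw] at hu'; exact nomatch hu')
            exact absurd (noVacO HP G hwcov.lt huw hSw (mem_shape_iff.mpr ⟨i, hu'⟩)) id
    · rcases stepI_some hne hu with ⟨rfl, hu'⟩ | ⟨hu1, hu2, hu'⟩
      · -- u = h : i = ly; y < h < v
        have hiy : i = ly := by rw [hly] at hu'; exact (Option.some_inj.mp hu').symm
        subst hiy
        exact G.2.2.2.1 (hhy.trans huv) hly hv'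
      · exact G.2.2.2.1 huv hu' hv'
  · -- InjL
    intro u v i hu hv
    rcases stepI_some hne hu with ⟨heu, hu'⟩ | ⟨hu1, hu2, hu'⟩ <;>
      rcases stepI_some hne hv with ⟨hev, hv'⟩ | ⟨hv1, hv2, hv'⟩
    · rw [heu, hev]
    · exact absurd (G.2.2.2.2 hv' hu') hv2
    · exact absurd (G.2.2.2.2 hu' hv') hu2
    · exact G.2.2.2.2 hu' hv'

lemma midOf_none {a m : ℕ} {P : Λ → Option ℕ} {x : Λ} (hP : P x = none) :
    midOf a m P x = none := by simp [midOf, hP]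

lemma mem_shape_midOf {a m : ℕ} {P : Λ → Option ℕ} {x : Λ} :
    x ∈ shape (midOf a m P) ↔ ∃ i, P x = some i ∧ a < i ∧ i ≤ a + m := by
  rw [mem_shape_iff]
  constructor
  · rintro ⟨j, hj⟩
    simp only [midOf] at hj
    cases hP : P x with
    | none => rw [hP] at hj; simp at hj
    | some i =>
      rw [hP] at hj
      by_cases hcond : a < i ∧ i ≤ a + m
      · exact ⟨i, rfl, hcond⟩
      · simp [hcond] at hj
  · rintro ⟨i, hP, hcond⟩
    exact ⟨i - a, by simp [midOf, hP, hcond]⟩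

lemma midOf_eq_some {a m : ℕ} {P : Λ → Option ℕ} {x : Λ} {i : ℕ} (hP : P x = some i)
    (h1 : a < i) (h2 : i ≤ a + m) : midOf a m P x = some (i - a) := by
  simp [midOf, hP, h1, h2]

lemma entryAdmI {a m : ℕ} {P₀ S : Λ → Option ℕ} {x₀ h : Λ}
    (HP : InnerAdmissible P₀ x₀) (G : SGoodI P₀ x₀ S h)
    (hnoA : ∀ w ∈ candI S h, a < lab S w)
    (hM : ∃ w ∈ candI S h, lab S w ≤ a + m) :
    InnerAdmissible (midOf a m S) h := by
  obtain ⟨w₀, hw₀c, hw₀M⟩ := hM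
  rw [mem_candI] at hw₀c
  obtain ⟨l₀, hl₀⟩ := mem_shape_iff.mp hw₀c.1
  have hlabl₀ : lab S w₀ = l₀ := by simp [lab, hl₀]
  refine ⟨midOf_none G.1, ⟨w₀, ?_, hw₀c.2.lt⟩, ?_⟩
  · rw [mem_shape_midOf]
    exact ⟨l₀, hl₀, by rw [← hlabl₀]; exact hnoA w₀ (mem_candI.mpr hw₀c), by rw [← hlabl₀]; exact hw₀M⟩
  · intro z hz hex hlt
    obtain ⟨y₀, hy₀, hzy₀⟩ := hex
    rw [mem_shape_midOf] at hy₀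
    obtain ⟨j, hjS, hja, hjam⟩ := hy₀
    cases hSz : S z with
    | none =>
      have hPz : P₀ z = none := by
        rw [← G.2.2.1 z (fun hle => absurd (lt_of_lt_of_le hlt hle) (lt_irrefl h))]; exact hSz
      have hPy₀ : P₀ y₀ = some j := by
        rw [← G.2.2.1 y₀ (fun hle => absurd (lt_of_lt_of_le (hlt.trans hzy₀) hle) (lt_irrefl h))]
        exact hjS
      exact HP.2.2 z hPz ⟨y₀, mem_shape_iff.mpr ⟨j, hPy₀⟩, hzy₀⟩ (lt_of_le_of_lt G.2.1 hlt)
    | some l =>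
      have hnotmid : ¬ (a < l ∧ l ≤ a + m) := by
        intro hcond
        rw [midOf_eq_some hSz hcond.1 hcond.2] at hz
        exact nomatch hz
      by_cases hl : l ≤ a
      · obtain ⟨w, hwcov, hwz⟩ := exists_covBy_le hlt
        cases hSw : S w with
        | some lw =>
          have hwc : w ∈ candI S h := mem_candI.mpr ⟨mem_shape_iff.mpr ⟨lw, hSw⟩, hwcov⟩
          have halw : a < lab S w := hnoA w hwc
          rw [show lab S w = lw by simp [lab, hSw]] at halw
          rcases eq_or_lt_of_le hwz with rfl | hwlt
          · rw [hSw] at hSz; have : lw = l := Option.some_inj.mp hSz; omega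
          · have := G.2.2.2.1 hwlt hSw hSz; omega
        | none =>
          have hwlt : w < z := lt_of_le_of_ne hwz (fun he => by
            rw [he] at hSw; rw [hSw] at hSz; exact nomatch hSz)
          exact noVacI HP G hwcov.lt hwlt hSw (mem_shape_iff.mpr ⟨l, hSz⟩)
      · have hbig : a + m < l := by omega
        have := G.2.2.2.1 hzy₀ hSz hjS
        omega

lemma entryAdmO {a m : ℕ} {P₀ S : Λ → Option ℕ} {x₀ h : Λ}
    (HP : OuterAdmissible P₀ x₀) (G : SGoodO P₀ x₀ S h)
    (hnoB : ∀ w ∈ candO S h, lab S w ≤ a + m)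
    (hM : ∃ w ∈ candO S h, a < lab S w) :
    OuterAdmissible (midOf a m S) h := by
  obtain ⟨w₀, hw₀c, hw₀M⟩ := hM
  rw [mem_candO] at hw₀c
  obtain ⟨l₀, hl₀⟩ := mem_shape_iff.mp hw₀c.1
  have hlabl₀ : lab S w₀ = l₀ := by simp [lab, hl₀]
  refine ⟨midOf_none G.1, ⟨w₀, ?_, hw₀c.2.lt⟩, ?_⟩
  · rw [mem_shape_midOf]
    exact ⟨l₀, hl₀, by rw [← hlabl₀]; exact hw₀M, by rw [← hlabl₀]; exact hnoB w₀ (mem_candO.mpr hw₀c)⟩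
  · intro z hz hex hlt
    obtain ⟨y₀, hy₀, hzy₀⟩ := hex
    rw [mem_shape_midOf] at hy₀
    obtain ⟨j, hjS, hja, hjam⟩ := hy₀
    cases hSz : S z with
    | none =>
      have hPz : P₀ z = none := by
        rw [← G.2.2.1 z (fun hle => absurd (lt_of_le_of_lt hle hlt) (lt_irrefl h))]; exact hSz
      have hPy₀ : P₀ y₀ = some j := by
        rw [← G.2.2.1 y₀ (fun hle => absurd (lt_of_le_of_lt hle (hzy₀.trans hlt)) (lt_irrefl h))]
        exact hjS
      exact HP.2.2 z hPz ⟨y₀, mem_shape_iff.mpr ⟨j, hPy₀⟩, hzy₀⟩ (lt_of_lt_of_le hlt G.2.1)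
    | some l =>
      have hnotmid : ¬ (a < l ∧ l ≤ a + m) := by
        intro hcond
        rw [midOf_eq_some hSz hcond.1 hcond.2] at hz
        exact nomatch hz
      by_cases hl : a + m < l
      · obtain ⟨w, hwz, hwcov⟩ := exists_le_covBy hlt
        cases hSw : S w with
        | some lw =>
          have hwc : w ∈ candO S h := mem_candO.mpr ⟨mem_shape_iff.mpr ⟨lw, hSw⟩, hwcov⟩
          have halw : lab S w ≤ a + m := hnoB w hwc
          rw [show lab S w = lw by simp [lab, hSw]] at halw
          rcases eq_or_lt_of_le hwz with rfl | hwlt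
          · rw [hSw] at hSz; have : lw = l := Option.some_inj.mp hSz; omega
          · have := G.2.2.2.1 hwlt hSz hSw; omega
        | none =>
          have hwlt : z < w := lt_of_le_of_ne hwz (fun he => by
            rw [← he] at hSw; rw [hSw] at hSz; exact nomatch hSz)
          exact noVacO HP G hwcov.lt hwlt hSw (mem_shape_iff.mpr ⟨l, hSz⟩)
      · have hsmall : l ≤ a := by omega
        have := G.2.2.2.1 hzy₀ hjS hSz
        omega

lemma insert_insert_erase {y h : Λ} {M : Finset Λ} (hyM : y ∈ M) :
    insert y (insert h (M.erase y)) = insert h M := by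
  ext z
  by_cases h1 : z = y <;> by_cases h2 : z = h <;> simp [h1, h2, hyM]

lemma midsimI (a m : ℕ) (P₀ : Λ → Option ℕ) (x₀ : Λ) (HP : InnerAdmissible P₀ x₀) :
    ∀ (k : ℕ) (S : Λ → Option ℕ) (h : Λ), ubI h ≤ k →
    SGoodI P₀ x₀ S h →
    (∀ w ∈ candI S h, a < lab S w) →
    ∃ (e : Λ) (Sm : Λ → Option ℕ),
      slideF S h = slideF Sm e ∧
      SGoodI P₀ x₀ Sm e ∧ h ≤ e ∧
      outOf a m Sm = outOf a m S ∧
      midOf a m Sm = slideF (midOf a m S) h ∧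
      shape (midOf a m Sm) = (insert h (shape (midOf a m S))).erase e ∧
      e ∈ insert h (shape (midOf a m S)) ∧
      (∀ w ∈ candI Sm e, a + m < lab Sm w) ∧
      ((∃ w ∈ candI S h, lab S w ≤ a + m) → h < e) := by
  intro k
  induction k using Nat.strong_induction_on with
  | _ k ih =>
  intro S h hub G hnoA
  by_cases hM : ∃ w ∈ candI S h, lab S w ≤ a + m
  · -- mid candidate exists: do one step
    obtain ⟨w₀, hw₀, hw₀M⟩ := hM
    have hc : (candI S h).Nonempty := ⟨w₀, hw₀⟩
    set y := pickMinBy (lab S) (candI S h) hc with hydef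
    obtain ⟨hymem, hymin⟩ := pickMinBy_spec (lab S) (candI S h) hc
    rw [← hydef] at hymem hymin
    have hycand := hymem
    rw [mem_candI] at hymem
    obtain ⟨hyS, hycov⟩ := hymem
    have hhy : h < y := hycov.lt
    have hne : h ≠ y := ne_of_lt hhy
    obtain ⟨ly, hly⟩ := mem_shape_iff.mp hyS
    have hlably : lab S y = ly := by simp [lab, hly]
    have hlya : a < ly := by rw [← hlably]; exact hnoA y hycand
    have hlyam : ly ≤ a + m := by
      rw [← hlably]; exact le_trans (hymin w₀ hw₀) hw₀M
    set W := midOf a m S with hWdef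
    have hWy : W y = some (ly - a) := midOf_eq_some hly hlya hlyam
    have hyW : y ∈ shape W := mem_shape_iff.mpr ⟨ly - a, hWy⟩
    have hWh : W h = none := midOf_none G.1
    have hcW : (candI W h).Nonempty := ⟨y, mem_candI.mpr ⟨hyW, hycov⟩⟩
    -- standalone pick equals y
    have hpickW : pickMinBy (lab W) (candI W h) hcW = y := by
      set p := pickMinBy (lab W) (candI W h) hcW with hpdef
      obtain ⟨hpmem, hpmin⟩ := pickMinBy_spec (lab W) (candI W h) hcW
      rw [← hpdef] at hpmem hpmin
      rw [mem_candI] at hpmem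
      obtain ⟨hpW, hpcov⟩ := hpmem
      rw [mem_shape_midOf] at hpW
      obtain ⟨lp, hlp, hlpa, hlpam⟩ := hpW
      have hpS : p ∈ candI S h := mem_candI.mpr ⟨mem_shape_iff.mpr ⟨lp, hlp⟩, hpcov⟩
      have h1 : ly ≤ lp := by
        have := hymin p hpS; rw [hlably, show lab S p = lp by simp [lab, hlp]] at this; exact this
      have hWp : W p = some (lp - a) := midOf_eq_some hlp hlpa hlpam
      have h2 : lp - a ≤ ly - a := by
        have := hpmin y (mem_candI.mpr ⟨hyW, hycov⟩)
        rw [show lab W p = lp - a by simp [lab, hWp],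
            show lab W y = ly - a by simp [lab, hWy]] at this
        exact this
      have : lp = ly := by omega
      exact G.2.2.2.2 (this ▸ hlp) hly
    set S₁ := stepI S h y with hS₁def
    have G₁ : SGoodI P₀ x₀ S₁ y := by
      have := stepGoodI HP G hc
      rw [← hydef] at this; exact this
    -- mid commutes with the step
    have hmid₁ : midOf a m S₁ = stepI W h y := by
      funext z
      by_cases h1 : z = h
      · have e1 : S₁ z = some ly := by rw [h1]; simp [hS₁def, stepI, hly]
        have e2 : stepI W h y z = some (ly - a) := by rw [h1]; simp [stepI, hWy]
        rw [midOf_eq_some e1 hlya hlyam, e2]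
      · by_cases h2 : z = y
        · have e1 : S₁ z = none := by rw [h2]; simp [hS₁def, stepI, Ne.symm hne]
          have e2 : stepI W h y z = none := by rw [h2]; simp [stepI, Ne.symm hne]
          rw [midOf_none e1, e2]
        · have e1 : S₁ z = S z := by simp [hS₁def, stepI, h1, h2]
          have e2 : stepI W h y z = W z := by simp [stepI, h1, h2]
          rw [e2, hWdef]
          simp [midOf, e1]
    have hout₁ : outOf a m S₁ = outOf a m S := by
      funext z
      by_cases h1 : z = h
      · have e1 : S₁ z = some ly := by rw [h1]; simp [hS₁def, stepI, hly]
        have e0 : S z = none := by rw [h1]; exact G.1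
        simp [outOf, e1, e0, hlya, hlyam]
      · by_cases h2 : z = y
        · have e1 : S₁ z = none := by rw [h2]; simp [hS₁def, stepI, Ne.symm hne]
          have e0 : S z = some ly := by rw [h2]; exact hly
          simp [outOf, e1, e0, hlya, hlyam]
        · have e1 : S₁ z = S z := by simp [hS₁def, stepI, h1, h2]
          simp [outOf, e1]
    have hnoA₁ : ∀ w ∈ candI S₁ y, a < lab S₁ w := by
      intro w hw
      rw [mem_candI] at hw
      obtain ⟨hwS, hwcov⟩ := hw
      obtain ⟨lw, hlw⟩ := mem_shape_iff.mp hwS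
      have hwh : w ≠ h := fun he => absurd (he ▸ (hhy.trans hwcov.lt)) (lt_irrefl _)
      have hwy : w ≠ y := ne_of_gt hwcov.lt
      have hSw : S w = some lw := by
        rw [← hlw]; simp [hS₁def, stepI, hwh, hwy]
      have : ly < lw := G.2.2.2.1 hwcov.lt hly hSw
      rw [show lab S₁ w = lw by simp [lab, hlw]]
      omega
    have huby : ubI y < k := lt_of_lt_of_le (ubI_lt hhy) hub
    obtain ⟨e, Sm, r1, r2, r3, r4, r5, r6, r7, r8, _⟩ :=
      ih (ubI y) huby S₁ y le_rfl G₁ hnoA₁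
    have hSH : shape (midOf a m S₁) = insert h ((shape W).erase y) := by
      rw [hmid₁]; exact stepI_shape hyW hWh hne
    refine ⟨e, Sm, ?_, r2, le_of_lt (lt_of_lt_of_le hhy r3), ?_, ?_, ?_, ?_, r8, fun _ => lt_of_lt_of_le hhy r3⟩
    · rw [slideF_step hc, ← hydef, ← hS₁def, r1]
    · rw [r4, hout₁]
    · rw [r5, hmid₁, slideF_step hcW, hpickW]
    · rw [r6, hSH, insert_insert_erase hyW]
    · rw [hSH, insert_insert_erase hyW] at r7
      exact r7
  · -- base: no mid candidate
    push_neg at hM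
    have hcWempty : ¬ (candI (midOf a m S) h).Nonempty := by
      rintro ⟨w, hw⟩
      rw [mem_candI] at hw
      obtain ⟨hwW, hwcov⟩ := hw
      rw [mem_shape_midOf] at hwW
      obtain ⟨lw, hlw, hlwa, hlwam⟩ := hwW
      have : w ∈ candI S h := mem_candI.mpr ⟨mem_shape_iff.mpr ⟨lw, hlw⟩, hwcov⟩
      have := hM w this
      rw [show lab S w = lw by simp [lab, hlw]] at this
      omega
    have hWh : (midOf a m S) h = none := midOf_none G.1
    refine ⟨h, S, rfl, G, le_rfl, rfl, (slideF_empty hcWempty).symm, ?_, Finset.mem_insert_self _ _, ?_, ?_⟩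
    · rw [Finset.erase_insert (by rw [not_mem_shape_iff]; exact hWh)]
    · intro w hw
      have h1 := hnoA w hw
      have h2 := hM w hw
      omega
    · rintro ⟨w, hw, hwM⟩
      have := hM w hw
      omega

lemma midsimO (a m : ℕ) (P₀ : Λ → Option ℕ) (x₀ : Λ) (HP : OuterAdmissible P₀ x₀) :
    ∀ (k : ℕ) (S : Λ → Option ℕ) (h : Λ), ubO h ≤ k →
    SGoodO P₀ x₀ S h →
    (∀ w ∈ candO S h, lab S w ≤ a + m) →
    ∃ (e : Λ) (Sm : Λ → Option ℕ),
      revSlideF S h = revSlideF Sm e ∧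
      SGoodO P₀ x₀ Sm e ∧ e ≤ h ∧
      outOf a m Sm = outOf a m S ∧
      midOf a m Sm = revSlideF (midOf a m S) h ∧
      shape (midOf a m Sm) = (insert h (shape (midOf a m S))).erase e ∧
      e ∈ insert h (shape (midOf a m S)) ∧
      (∀ w ∈ candO Sm e, lab Sm w ≤ a) ∧
      ((∃ w ∈ candO S h, a < lab S w) → e < h) := by
  intro k
  induction k using Nat.strong_induction_on with
  | _ k ih =>
  intro S h hub G hnoB
  by_cases hM : ∃ w ∈ candO S h, a < lab S w
  · -- mid candidate exists: do one step
    obtain ⟨w₀, hw₀, hw₀M⟩ := hM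
    have hc : (candO S h).Nonempty := ⟨w₀, hw₀⟩
    set y := pickMaxBy (lab S) (candO S h) hc with hydef
    obtain ⟨hymem, hymax⟩ := pickMaxBy_spec (lab S) (candO S h) hc
    rw [← hydef] at hymem hymax
    have hycand := hymem
    rw [mem_candO] at hymem
    obtain ⟨hyS, hycov⟩ := hymem
    have hhy : y < h := hycov.lt
    have hne : h ≠ y := ne_of_gt hhy
    obtain ⟨ly, hly⟩ := mem_shape_iff.mp hyS
    have hlably : lab S y = ly := by simp [lab, hly]
    have hlyam : ly ≤ a + m := by rw [← hlably]; exact hnoB y hycand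
    have hlya : a < ly := by
      rw [← hlably]; exact lt_of_lt_of_le hw₀M (hymax w₀ hw₀)
    set W := midOf a m S with hWdef
    have hWy : W y = some (ly - a) := midOf_eq_some hly hlya hlyam
    have hyW : y ∈ shape W := mem_shape_iff.mpr ⟨ly - a, hWy⟩
    have hWh : W h = none := midOf_none G.1
    have hcW : (candO W h).Nonempty := ⟨y, mem_candO.mpr ⟨hyW, hycov⟩⟩
    -- standalone pick equals y
    have hpickW : pickMaxBy (lab W) (candO W h) hcW = y := by
      set p := pickMaxBy (lab W) (candO W h) hcW with hpdef
      obtain ⟨hpmem, hpmax⟩ := pickMaxBy_spec (lab W) (candO W h) hcW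
      rw [← hpdef] at hpmem hpmax
      rw [mem_candO] at hpmem
      obtain ⟨hpW, hpcov⟩ := hpmem
      rw [mem_shape_midOf] at hpW
      obtain ⟨lp, hlp, hlpa, hlpam⟩ := hpW
      have hpS : p ∈ candO S h := mem_candO.mpr ⟨mem_shape_iff.mpr ⟨lp, hlp⟩, hpcov⟩
      have h1 : lp ≤ ly := by
        have := hymax p hpS; rw [hlably, show lab S p = lp by simp [lab, hlp]] at this; exact this
      have hWp : W p = some (lp - a) := midOf_eq_some hlp hlpa hlpam
      have h2 : ly - a ≤ lp - a := by
        have := hpmax y (mem_candO.mpr ⟨hyW, hycov⟩)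
        rw [show lab W p = lp - a by simp [lab, hWp],
            show lab W y = ly - a by simp [lab, hWy]] at this
        exact this
      have : lp = ly := by omega
      exact G.2.2.2.2 (this ▸ hlp) hly
    set S₁ := stepI S h y with hS₁def
    have G₁ : SGoodO P₀ x₀ S₁ y := by
      have := stepGoodO HP G hc
      rw [← hydef] at this; exact this
    have hmid₁ : midOf a m S₁ = stepI W h y := by
      funext z
      by_cases h1 : z = h
      · have e1 : S₁ z = some ly := by rw [h1]; simp [hS₁def, stepI, hly]
        have e2 : stepI W h y z = some (ly - a) := by rw [h1]; simp [stepI, hWy]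
        rw [midOf_eq_some e1 hlya hlyam, e2]
      · by_cases h2 : z = y
        · have e1 : S₁ z = none := by rw [h2]; simp [hS₁def, stepI, Ne.symm hne]
          have e2 : stepI W h y z = none := by rw [h2]; simp [stepI, Ne.symm hne]
          rw [midOf_none e1, e2]
        · have e1 : S₁ z = S z := by simp [hS₁def, stepI, h1, h2]
          have e2 : stepI W h y z = W z := by simp [stepI, h1, h2]
          rw [e2, hWdef]
          simp [midOf, e1]
    have hout₁ : outOf a m S₁ = outOf a m S := by
      funext z
      by_cases h1 : z = h
      · have e1 : S₁ z = some ly := by rw [h1]; simp [hS₁def, stepI, hly]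
        have e0 : S z = none := by rw [h1]; exact G.1
        simp [outOf, e1, e0, hlya, hlyam]
      · by_cases h2 : z = y
        · have e1 : S₁ z = none := by rw [h2]; simp [hS₁def, stepI, Ne.symm hne]
          have e0 : S z = some ly := by rw [h2]; exact hly
          simp [outOf, e1, e0, hlya, hlyam]
        · have e1 : S₁ z = S z := by simp [hS₁def, stepI, h1, h2]
          simp [outOf, e1]
    have hnoB₁ : ∀ w ∈ candO S₁ y, lab S₁ w ≤ a + m := by
      intro w hw
      rw [mem_candO] at hw
      obtain ⟨hwS, hwcov⟩ := hw
      obtain ⟨lw, hlw⟩ := mem_shape_iff.mp hwS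
      have hwh : w ≠ h := fun he => absurd (he ▸ (hwcov.lt.trans hhy)) (lt_irrefl _)
      have hwy : w ≠ y := ne_of_lt hwcov.lt
      have hSw : S w = some lw := by
        rw [← hlw]; simp [hS₁def, stepI, hwh, hwy]
      have : lw < ly := G.2.2.2.1 hwcov.lt hSw hly
      rw [show lab S₁ w = lw by simp [lab, hlw]]
      omega
    have huby : ubO y < k := lt_of_lt_of_le (ubO_lt hhy) hub
    obtain ⟨e, Sm, r1, r2, r3, r4, r5, r6, r7, r8, _⟩ :=
      ih (ubO y) huby S₁ y le_rfl G₁ hnoB₁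
    have hSH : shape (midOf a m S₁) = insert h ((shape W).erase y) := by
      rw [hmid₁]; exact stepI_shape hyW hWh hne
    refine ⟨e, Sm, ?_, r2, le_of_lt (lt_of_le_of_lt r3 hhy), ?_, ?_, ?_, ?_, r8, fun _ => lt_of_le_of_lt r3 hhy⟩
    · rw [revSlideF_step hc, ← hydef, ← hS₁def, r1]
    · rw [r4, hout₁]
    · rw [r5, hmid₁, revSlideF_step hcW, hpickW]
    · rw [r6, hSH, insert_insert_erase hyW]
    · rw [hSH, insert_insert_erase hyW] at r7
      exact r7
  · -- base: no mid candidate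
    push_neg at hM
    have hcWempty : ¬ (candO (midOf a m S) h).Nonempty := by
      rintro ⟨w, hw⟩
      rw [mem_candO] at hw
      obtain ⟨hwW, hwcov⟩ := hw
      rw [mem_shape_midOf] at hwW
      obtain ⟨lw, hlw, hlwa, hlwam⟩ := hwW
      have : w ∈ candO S h := mem_candO.mpr ⟨mem_shape_iff.mpr ⟨lw, hlw⟩, hwcov⟩
      have := hM w this
      rw [show lab S w = lw by simp [lab, hlw]] at this
      omega
    have hWh : (midOf a m S) h = none := midOf_none G.1
    refine ⟨h, S, rfl, G, le_rfl, rfl, (revSlideF_empty hcWempty).symm, ?_, Finset.mem_insert_self _ _, ?_, ?_⟩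
    · rw [Finset.erase_insert (by rw [not_mem_shape_iff]; exact hWh)]
    · intro w hw
      have h1 := hnoB w hw
      have h2 := hM w hw
      omega
    · rintro ⟨w, hw, hwM⟩
      have := hM w hw
      omega

lemma applySeq_nil (T : Λ → Option ℕ) : applySeq [] T = T := rfl

lemma applySeq_cons (p : Bool × Λ) (s : List (Bool × Λ)) (T : Λ → Option ℕ) :
    applySeq (p :: s) T = applySeq s (if p.1 then jdt p.2 T else revjdt p.2 T) := rfl

lemma jdt_eq_slideF {T : Λ → Option ℕ} {x : Λ} (hadm : InnerAdmissible T x) :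
    jdt x T = slideF T x := by
  rw [jdt, if_pos hadm]
  exact slideF_eq _ _ _ (ubI_le_card x)

lemma revjdt_eq_revSlideF {T : Λ → Option ℕ} {x : Λ} (hadm : OuterAdmissible T x) :
    revjdt x T = revSlideF T x := by
  rw [revjdt, if_pos hadm]
  exact revSlideF_eq _ _ _ (ubO_le_card x)

lemma innerAdm_congr {P Q : Λ → Option ℕ} (hsh : shape P = shape Q) {x : Λ} :
    InnerAdmissible P x → InnerAdmissible Q x := by
  rintro ⟨h1, h2, h3⟩
  refine ⟨?_, ?_, ?_⟩
  · rw [← not_mem_shape_iff] at h1 ⊢; rw [← hsh]; exact h1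
  · obtain ⟨y, hy, hxy⟩ := h2; exact ⟨y, hsh ▸ hy, hxy⟩
  · intro z hz hex
    apply h3 z
    · rw [← not_mem_shape_iff] at hz ⊢; rw [hsh]; exact hz
    · obtain ⟨y, hy, hzy⟩ := hex; exact ⟨y, hsh ▸ hy, hzy⟩

lemma outerAdm_congr {P Q : Λ → Option ℕ} (hsh : shape P = shape Q) {x : Λ} :
    OuterAdmissible P x → OuterAdmissible Q x := by
  rintro ⟨h1, h2, h3⟩
  refine ⟨?_, ?_, ?_⟩
  · rw [← not_mem_shape_iff] at h1 ⊢; rw [← hsh]; exact h1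
  · obtain ⟨y, hy, hxy⟩ := h2; exact ⟨y, hsh ▸ hy, hxy⟩
  · intro z hz hex
    apply h3 z
    · rw [← not_mem_shape_iff] at hz ⊢; rw [hsh]; exact hz
    · obtain ⟨y, hy, hzy⟩ := hex; exact ⟨y, hsh ▸ hy, hzy⟩

lemma shape_decomp (a m : ℕ) (X : Λ → Option ℕ) :
    shape X = shape (outOf a m X) ∪ shape (midOf a m X) := by
  ext z
  rw [Finset.mem_union, mem_shape_iff, mem_shape_iff, mem_shape_iff]
  cases hz : X z with
  | none => simp [outOf, midOf, hz]
  | some i =>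
    by_cases hcond : a < i ∧ i ≤ a + m
    · simp [outOf, midOf, hz, hcond]
    · simp [outOf, midOf, hz, hcond]

lemma erase_inj_of_mem {A : Finset Λ} {e e' : Λ} (he : e ∈ A) (he' : e' ∈ A)
    (h : A.erase e = A.erase e') : e = e' := by
  by_contra hne
  have : e ∈ A.erase e' := Finset.mem_erase.mpr ⟨hne, he⟩
  rw [← h] at this
  exact (Finset.mem_erase.mp this).1 rfl

lemma candI_congr {S S' : Λ → Option ℕ} (hsh : shape S = shape S') (h : Λ) :
    candI S h = candI S' h := by unfold candI; rw [hsh]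

lemma candO_congr {S S' : Λ → Option ℕ} (hsh : shape S = shape S') (h : Λ) :
    candO S h = candO S' h := by unfold candO; rw [hsh]

lemma pairSlideI (a m : ℕ) (P₀ Q₀ : Λ → Option ℕ) (x₀ : Λ)
    (HP : InnerAdmissible P₀ x₀) (HQ : InnerAdmissible Q₀ x₀) :
    ∀ (k : ℕ) (S S' : Λ → Option ℕ) (h : Λ), ubI h ≤ k →
    SGoodI P₀ x₀ S h → SGoodI Q₀ x₀ S' h →
    shape S = shape S' → outOf a m S = outOf a m S' →
    (∀ s, shape (applySeq s (midOf a m S)) = shape (applySeq s (midOf a m S'))) →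
    shape (slideF S h) = shape (slideF S' h) ∧
    outOf a m (slideF S h) = outOf a m (slideF S' h) ∧
    Inc (slideF S h) ∧ Inc (slideF S' h) ∧ InjL (slideF S h) ∧ InjL (slideF S' h) ∧
    (∀ s, shape (applySeq s (midOf a m (slideF S h))) = shape (applySeq s (midOf a m (slideF S' h)))) := by
  intro k
  induction k using Nat.strong_induction_on with
  | _ k ih =>
  intro S S' h hub G G' hsh hout hmid
  have hmid0 : shape (midOf a m S) = shape (midOf a m S') := hmid []
  have hC : candI S h = candI S' h := candI_congr hsh h
  by_cases hc : (candI S h).Nonempty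
  · set y := pickMinBy (lab S) (candI S h) hc with hydef
    obtain ⟨hymem, hymin⟩ := pickMinBy_spec (lab S) (candI S h) hc
    rw [← hydef] at hymem hymin
    have hycand := hymem
    rw [mem_candI] at hymem
    obtain ⟨hyS, hycov⟩ := hymem
    have hhy : h < y := hycov.lt
    have hne : h ≠ y := ne_of_lt hhy
    obtain ⟨ly, hly⟩ := mem_shape_iff.mp hyS
    have hlably : lab S y = ly := by simp [lab, hly]
    by_cases hM : a < ly ∧ ly ≤ a + m
    · -- MID ENTRY
      have hnoA : ∀ w ∈ candI S h, a < lab S w := fun w hw =>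
        lt_of_lt_of_le hM.1 (hlably ▸ hymin w hw)
      have hMex : ∃ w ∈ candI S h, lab S w ≤ a + m := ⟨y, hycand, hlably ▸ hM.2⟩
      have hyW : y ∈ shape (midOf a m S) := mem_shape_midOf.mpr ⟨ly, hly, hM.1, hM.2⟩
      have hyW' : y ∈ shape (midOf a m S') := hmid0 ▸ hyW
      obtain ⟨ly', hly', hly'a, hly'am⟩ := mem_shape_midOf.mp hyW'
      have hnoA' : ∀ w ∈ candI S' h, a < lab S' w := by
        intro w hw
        have hwS := (mem_candI.mp hw).1
        obtain ⟨j, hj⟩ := mem_shape_iff.mp hwS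
        rw [show lab S' w = j by simp [lab, hj]]
        by_cases hjmid : a < j ∧ j ≤ a + m
        · exact hjmid.1
        · -- out box: same label in S
          have hoj : outOf a m S' w = some j := by simp [outOf, hj, hjmid]
          have hSj : S w = some j := by
            have := hout ▸ hoj
            simp only [outOf] at this
            cases hSw : S w with
            | none => rw [hSw] at this; simp at this
            | some j₂ =>
              rw [hSw] at this
              by_cases hcond : a < j₂ ∧ j₂ ≤ a + m
              · simp [hcond] at this
              · simp [hcond] at this; rw [this]
          have := hnoA w (hC ▸ hw)
          rw [show lab S w = j by simp [lab, hSj]] at this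
          exact this
      have hMex' : ∃ w ∈ candI S' h, lab S' w ≤ a + m :=
        ⟨y, hC ▸ hycand, by rw [show lab S' y = ly' by simp [lab, hly']]; omega⟩
      have admW := entryAdmI HP G hnoA hMex
      have admW' := entryAdmI HQ G' hnoA' hMex'
      obtain ⟨e, Sm, m1, m2, m3, m4, m5, m6, m7, m8, m9⟩ :=
        midsimI a m P₀ x₀ HP (ubI h) S h le_rfl G hnoA
      obtain ⟨e', S'm, n1, n2, n3, n4, n5, n6, n7, n8, n9⟩ :=
        midsimI a m Q₀ x₀ HQ (ubI h) S' h le_rfl G' hnoA'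
      have hjdteq : shape (midOf a m Sm) = shape (midOf a m S'm) := by
        rw [m5, n5, ← jdt_eq_slideF admW, ← jdt_eq_slideF admW']
        have := hmid [(true, h)]
        simpa [applySeq_cons, applySeq_nil] using this
      have hee' : e = e' := by
        apply erase_inj_of_mem m7 (hmid0 ▸ n7)
        rw [← m6, hjdteq, n6, ← hmid0]
      subst hee'
      have hshm : shape Sm = shape S'm := by
        rw [shape_decomp a m Sm, shape_decomp a m S'm, m4, n4, hout, hjdteq]
      have houtm : outOf a m Sm = outOf a m S'm := by rw [m4, n4, hout]
      have hmidm : ∀ s, shape (applySeq s (midOf a m Sm)) = shape (applySeq s (midOf a m S'm)) := by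
        intro s
        rw [m5, n5, ← jdt_eq_slideF admW, ← jdt_eq_slideF admW']
        have := hmid ((true, h) :: s)
        simpa [applySeq_cons] using this
      have hlt : h < e := m9 hMex
      have hube : ubI e < k := lt_of_lt_of_le (ubI_lt hlt) hub
      have := ih (ubI e) hube Sm S'm e le_rfl m2 n2 hshm houtm hmidm
      rw [← m1, ← n1] at this
      exact this
    · -- OUT LOCKSTEP
      have hlout : outOf a m S y = some ly := by simp [outOf, hly, hM]
      have hly' : S' y = some ly := by
        have := hout ▸ hlout
        simp only [outOf] at this
        cases hSw : S' y with
        | none => rw [hSw] at this; simp at this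
        | some j₂ =>
          rw [hSw] at this
          by_cases hcond : a < j₂ ∧ j₂ ≤ a + m
          · simp [hcond] at this
          · simp [hcond] at this; rw [← this]
      have hmin' : ∀ c ∈ candI S' h, ly ≤ lab S' c := by
        intro c hcmem
        have hcS := (mem_candI.mp hcmem).1
        obtain ⟨j, hj⟩ := mem_shape_iff.mp hcS
        rw [show lab S' c = j by simp [lab, hj]]
        by_cases hjmid : a < j ∧ j ≤ a + m
        · -- c is a mid box of S', hence of S; derive bounds
          have hcW' : c ∈ shape (midOf a m S') := mem_shape_midOf.mpr ⟨j, hj, hjmid⟩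
          have hcW : c ∈ shape (midOf a m S) := hmid0 ▸ hcW'
          obtain ⟨j₂, hj₂, hj₂a, hj₂am⟩ := mem_shape_midOf.mp hcW
          have := hymin c (hC ▸ hcmem)
          rw [hlably, show lab S c = j₂ by simp [lab, hj₂]] at this
          -- ly ≤ j₂ ≤ a + m; ly not mid so ly ≤ a; j > a ≥ ly
          rcases (not_and_or.mp hM) with hMa | hMm
          · push_neg at hMa; omega
          · push_neg at hMm; omega
        · have hoj : outOf a m S' c = some j := by simp [outOf, hj, hjmid]
          have hSj : S c = some j := by
            have := hout ▸ hoj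
            simp only [outOf] at this
            cases hSw : S c with
            | none => rw [hSw] at this; simp at this
            | some j₂ =>
              rw [hSw] at this
              by_cases hcond : a < j₂ ∧ j₂ ≤ a + m
              · simp [hcond] at this
              · simp [hcond] at this; rw [this]
          have := hymin c (hC ▸ hcmem)
          rw [hlably, show lab S c = j by simp [lab, hSj]] at this
          exact this
      have hc' : (candI S' h).Nonempty := hC ▸ hc
      have hpick' : pickMinBy (lab S') (candI S' h) hc' = y := by
        set p := pickMinBy (lab S') (candI S' h) hc' with hpdef
        obtain ⟨hpmem, hpmin⟩ := pickMinBy_spec (lab S') (candI S' h) hc'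
        rw [← hpdef] at hpmem hpmin
        have h1 : lab S' p ≤ ly := by
          have := hpmin y (hC ▸ hycand)
          rw [show lab S' y = ly by simp [lab, hly']] at this
          exact this
        have h2 : ly ≤ lab S' p := hmin' p hpmem
        have h3 : lab S' p = ly := le_antisymm h1 h2
        obtain ⟨jp, hjp⟩ := mem_shape_iff.mp (mem_candI.mp hpmem).1
        rw [show lab S' p = jp by simp [lab, hjp]] at h3
        subst h3
        exact G'.2.2.2.2 hjp hly'
      set S₁ := stepI S h y with hS₁def
      set S₁' := stepI S' h y with hS₁'def
      have G₁ : SGoodI P₀ x₀ S₁ y := by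
        have := stepGoodI HP G hc; rw [← hydef] at this; exact this
      have G₁' : SGoodI Q₀ x₀ S₁' y := by
        have := stepGoodI HQ G' hc'; rw [hpick'] at this; exact this
      have hsh₁ : shape S₁ = shape S₁' := by
        rw [hS₁def, hS₁'def, stepI_shape hyS G.1 hne,
            stepI_shape (hsh ▸ hyS) G'.1 hne, hsh]
      have hout₁ : outOf a m S₁ = outOf a m S₁' := by
        funext z
        by_cases h1 : z = h
        · have e1 : S₁ z = some ly := by rw [h1]; simp [hS₁def, stepI, hly]
          have e2 : S₁' z = some ly := by rw [h1]; simp [hS₁'def, stepI, hly']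
          simp [outOf, e1, e2]
        · by_cases h2 : z = y
          · have e1 : S₁ z = none := by rw [h2]; simp [hS₁def, stepI, Ne.symm hne]
            have e2 : S₁' z = none := by rw [h2]; simp [hS₁'def, stepI, Ne.symm hne]
            simp [outOf, e1, e2]
          · have e1 : S₁ z = S z := by simp [hS₁def, stepI, h1, h2]
            have e2 : S₁' z = S' z := by simp [hS₁'def, stepI, h1, h2]
            simp only [outOf, e1, e2]
            have := congrFun hout z
            simpa [outOf] using this
      have hmidS₁ : midOf a m S₁ = midOf a m S := by
        funext z
        by_cases h1 : z = h
        · have e1 : S₁ z = some ly := by rw [h1]; simp [hS₁def, stepI, hly]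
          have e0 : S z = none := by rw [h1]; exact G.1
          simp [midOf, e1, e0, hM]
        · by_cases h2 : z = y
          · have e1 : S₁ z = none := by rw [h2]; simp [hS₁def, stepI, Ne.symm hne]
            have e0 : S z = some ly := by rw [h2]; exact hly
            simp [midOf, e1, e0, hM]
          · have e1 : S₁ z = S z := by simp [hS₁def, stepI, h1, h2]
            simp [midOf, e1]
      have hmidS₁' : midOf a m S₁' = midOf a m S' := by
        funext z
        by_cases h1 : z = h
        · have e1 : S₁' z = some ly := by rw [h1]; simp [hS₁'def, stepI, hly']
          have e0 : S' z = none := by rw [h1]; exact G'.1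
          simp [midOf, e1, e0, hM]
        · by_cases h2 : z = y
          · have e1 : S₁' z = none := by rw [h2]; simp [hS₁'def, stepI, Ne.symm hne]
            have e0 : S' z = some ly := by rw [h2]; exact hly'
            simp [midOf, e1, e0, hM]
          · have e1 : S₁' z = S' z := by simp [hS₁'def, stepI, h1, h2]
            simp [midOf, e1]
      have hmid₁ : ∀ s, shape (applySeq s (midOf a m S₁)) = shape (applySeq s (midOf a m S₁')) := by
        intro s; rw [hmidS₁, hmidS₁']; exact hmid s
      have huby : ubI y < k := lt_of_lt_of_le (ubI_lt hhy) hub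
      have := ih (ubI y) huby S₁ S₁' y le_rfl G₁ G₁' hsh₁ hout₁ hmid₁
      rw [slideF_step hc, ← hydef, ← hS₁def, slideF_step hc', hpick', ← hS₁'def]
      exact this
  · have hc' : ¬ (candI S' h).Nonempty := fun hne => hc (hC ▸ hne)
    rw [slideF_empty hc, slideF_empty hc']
    exact ⟨hsh, hout, G.2.2.2.1, G'.2.2.2.1, G.2.2.2.2, G'.2.2.2.2, hmid⟩

lemma pairSlideO (a m : ℕ) (P₀ Q₀ : Λ → Option ℕ) (x₀ : Λ)
    (HP : OuterAdmissible P₀ x₀) (HQ : OuterAdmissible Q₀ x₀) :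
    ∀ (k : ℕ) (S S' : Λ → Option ℕ) (h : Λ), ubO h ≤ k →
    SGoodO P₀ x₀ S h → SGoodO Q₀ x₀ S' h →
    shape S = shape S' → outOf a m S = outOf a m S' →
    (∀ s, shape (applySeq s (midOf a m S)) = shape (applySeq s (midOf a m S'))) →
    shape (revSlideF S h) = shape (revSlideF S' h) ∧
    outOf a m (revSlideF S h) = outOf a m (revSlideF S' h) ∧
    Inc (revSlideF S h) ∧ Inc (revSlideF S' h) ∧ InjL (revSlideF S h) ∧ InjL (revSlideF S' h) ∧
    (∀ s, shape (applySeq s (midOf a m (revSlideF S h))) = shape (applySeq s (midOf a m (revSlideF S' h)))) := by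
  intro k
  induction k using Nat.strong_induction_on with
  | _ k ih =>
  intro S S' h hub G G' hsh hout hmid
  have hmid0 : shape (midOf a m S) = shape (midOf a m S') := hmid []
  have hC : candO S h = candO S' h := candO_congr hsh h
  by_cases hc : (candO S h).Nonempty
  · set y := pickMaxBy (lab S) (candO S h) hc with hydef
    obtain ⟨hymem, hymax⟩ := pickMaxBy_spec (lab S) (candO S h) hc
    rw [← hydef] at hymem hymax
    have hycand := hymem
    rw [mem_candO] at hymem
    obtain ⟨hyS, hycov⟩ := hymem
    have hhy : y < h := hycov.lt
    have hne : h ≠ y := ne_of_gt hhy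
    obtain ⟨ly, hly⟩ := mem_shape_iff.mp hyS
    have hlably : lab S y = ly := by simp [lab, hly]
    by_cases hM : a < ly ∧ ly ≤ a + m
    · -- MID ENTRY
      have hnoB : ∀ w ∈ candO S h, lab S w ≤ a + m := fun w hw =>
        le_trans (hlably ▸ hymax w hw) hM.2
      have hMex : ∃ w ∈ candO S h, a < lab S w := ⟨y, hycand, hlably ▸ hM.1⟩
      have hyW : y ∈ shape (midOf a m S) := mem_shape_midOf.mpr ⟨ly, hly, hM.1, hM.2⟩
      have hyW' : y ∈ shape (midOf a m S') := hmid0 ▸ hyW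
      obtain ⟨ly', hly', hly'a, hly'am⟩ := mem_shape_midOf.mp hyW'
      have hnoB' : ∀ w ∈ candO S' h, lab S' w ≤ a + m := by
        intro w hw
        have hwS := (mem_candO.mp hw).1
        obtain ⟨j, hj⟩ := mem_shape_iff.mp hwS
        rw [show lab S' w = j by simp [lab, hj]]
        by_cases hjmid : a < j ∧ j ≤ a + m
        · exact hjmid.2
        · have hoj : outOf a m S' w = some j := by simp [outOf, hj, hjmid]
          have hSj : S w = some j := by
            have := hout ▸ hoj
            simp only [outOf] at this
            cases hSw : S w with
            | none => rw [hSw] at this; simp at this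
            | some j₂ =>
              rw [hSw] at this
              by_cases hcond : a < j₂ ∧ j₂ ≤ a + m
              · simp [hcond] at this
              · simp [hcond] at this; rw [this]
          have := hnoB w (hC ▸ hw)
          rw [show lab S w = j by simp [lab, hSj]] at this
          exact this
      have hMex' : ∃ w ∈ candO S' h, a < lab S' w :=
        ⟨y, hC ▸ hycand, by rw [show lab S' y = ly' by simp [lab, hly']]; omega⟩
      have admW := entryAdmO HP G hnoB hMex
      have admW' := entryAdmO HQ G' hnoB' hMex'
      obtain ⟨e, Sm, m1, m2, m3, m4, m5, m6, m7, m8, m9⟩ :=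
        midsimO a m P₀ x₀ HP (ubO h) S h le_rfl G hnoB
      obtain ⟨e', S'm, n1, n2, n3, n4, n5, n6, n7, n8, n9⟩ :=
        midsimO a m Q₀ x₀ HQ (ubO h) S' h le_rfl G' hnoB'
      have hjdteq : shape (midOf a m Sm) = shape (midOf a m S'm) := by
        rw [m5, n5, ← revjdt_eq_revSlideF admW, ← revjdt_eq_revSlideF admW']
        have := hmid [(false, h)]
        simpa [applySeq_cons, applySeq_nil] using this
      have hee' : e = e' := by
        apply erase_inj_of_mem m7 (hmid0 ▸ n7)
        rw [← m6, hjdteq, n6, ← hmid0]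
      subst hee'
      have hshm : shape Sm = shape S'm := by
        rw [shape_decomp a m Sm, shape_decomp a m S'm, m4, n4, hout, hjdteq]
      have houtm : outOf a m Sm = outOf a m S'm := by rw [m4, n4, hout]
      have hmidm : ∀ s, shape (applySeq s (midOf a m Sm)) = shape (applySeq s (midOf a m S'm)) := by
        intro s
        rw [m5, n5, ← revjdt_eq_revSlideF admW, ← revjdt_eq_revSlideF admW']
        have := hmid ((false, h) :: s)
        simpa [applySeq_cons] using this
      have hlt : e < h := m9 hMex
      have hube : ubO e < k := lt_of_lt_of_le (ubO_lt hlt) hub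
      have := ih (ubO e) hube Sm S'm e le_rfl m2 n2 hshm houtm hmidm
      rw [← m1, ← n1] at this
      exact this
    · -- OUT LOCKSTEP
      have hlout : outOf a m S y = some ly := by simp [outOf, hly, hM]
      have hly' : S' y = some ly := by
        have := hout ▸ hlout
        simp only [outOf] at this
        cases hSw : S' y with
        | none => rw [hSw] at this; simp at this
        | some j₂ =>
          rw [hSw] at this
          by_cases hcond : a < j₂ ∧ j₂ ≤ a + m
          · simp [hcond] at this
          · simp [hcond] at this; rw [← this]
      have hmax' : ∀ c ∈ candO S' h, lab S' c ≤ ly := by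
        intro c hcmem
        have hcS := (mem_candO.mp hcmem).1
        obtain ⟨j, hj⟩ := mem_shape_iff.mp hcS
        rw [show lab S' c = j by simp [lab, hj]]
        by_cases hjmid : a < j ∧ j ≤ a + m
        · have hcW' : c ∈ shape (midOf a m S') := mem_shape_midOf.mpr ⟨j, hj, hjmid⟩
          have hcW : c ∈ shape (midOf a m S) := hmid0 ▸ hcW'
          obtain ⟨j₂, hj₂, hj₂a, hj₂am⟩ := mem_shape_midOf.mp hcW
          have := hymax c (hC ▸ hcmem)
          rw [hlably, show lab S c = j₂ by simp [lab, hj₂]] at this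
          rcases (not_and_or.mp hM) with hMa | hMm
          · push_neg at hMa; omega
          · push_neg at hMm; omega
        · have hoj : outOf a m S' c = some j := by simp [outOf, hj, hjmid]
          have hSj : S c = some j := by
            have := hout ▸ hoj
            simp only [outOf] at this
            cases hSw : S c with
            | none => rw [hSw] at this; simp at this
            | some j₂ =>
              rw [hSw] at this
              by_cases hcond : a < j₂ ∧ j₂ ≤ a + m
              · simp [hcond] at this
              · simp [hcond] at this; rw [this]
          have := hymax c (hC ▸ hcmem)
          rw [hlably, show lab S c = j by simp [lab, hSj]] at this
          exact this
      have hc' : (candO S' h).Nonempty := hC ▸ hc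
      have hpick' : pickMaxBy (lab S') (candO S' h) hc' = y := by
        set p := pickMaxBy (lab S') (candO S' h) hc' with hpdef
        obtain ⟨hpmem, hpmax⟩ := pickMaxBy_spec (lab S') (candO S' h) hc'
        rw [← hpdef] at hpmem hpmax
        have h1 : ly ≤ lab S' p := by
          have := hpmax y (hC ▸ hycand)
          rw [show lab S' y = ly by simp [lab, hly']] at this
          exact this
        have h2 : lab S' p ≤ ly := hmax' p hpmem
        have h3 : lab S' p = ly := le_antisymm h2 h1
        obtain ⟨jp, hjp⟩ := mem_shape_iff.mp (mem_candO.mp hpmem).1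
        rw [show lab S' p = jp by simp [lab, hjp]] at h3
        subst h3
        exact G'.2.2.2.2 hjp hly'
      set S₁ := stepI S h y with hS₁def
      set S₁' := stepI S' h y with hS₁'def
      have G₁ : SGoodO P₀ x₀ S₁ y := by
        have := stepGoodO HP G hc; rw [← hydef] at this; exact this
      have G₁' : SGoodO Q₀ x₀ S₁' y := by
        have := stepGoodO HQ G' hc'; rw [hpick'] at this; exact this
      have hsh₁ : shape S₁ = shape S₁' := by
        rw [hS₁def, hS₁'def, stepI_shape hyS G.1 hne,
            stepI_shape (hsh ▸ hyS) G'.1 hne, hsh]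
      have hout₁ : outOf a m S₁ = outOf a m S₁' := by
        funext z
        by_cases h1 : z = h
        · have e1 : S₁ z = some ly := by rw [h1]; simp [hS₁def, stepI, hly]
          have e2 : S₁' z = some ly := by rw [h1]; simp [hS₁'def, stepI, hly']
          simp [outOf, e1, e2]
        · by_cases h2 : z = y
          · have e1 : S₁ z = none := by rw [h2]; simp [hS₁def, stepI, Ne.symm hne]
            have e2 : S₁' z = none := by rw [h2]; simp [hS₁'def, stepI, Ne.symm hne]
            simp [outOf, e1, e2]
          · have e1 : S₁ z = S z := by simp [hS₁def, stepI, h1, h2]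
            have e2 : S₁' z = S' z := by simp [hS₁'def, stepI, h1, h2]
            simp only [outOf, e1, e2]
            have := congrFun hout z
            simpa [outOf] using this
      have hmidS₁ : midOf a m S₁ = midOf a m S := by
        funext z
        by_cases h1 : z = h
        · have e1 : S₁ z = some ly := by rw [h1]; simp [hS₁def, stepI, hly]
          have e0 : S z = none := by rw [h1]; exact G.1
          simp [midOf, e1, e0, hM]
        · by_cases h2 : z = y
          · have e1 : S₁ z = none := by rw [h2]; simp [hS₁def, stepI, Ne.symm hne]
            have e0 : S z = some ly := by rw [h2]; exact hly
            simp [midOf, e1, e0, hM]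
          · have e1 : S₁ z = S z := by simp [hS₁def, stepI, h1, h2]
            simp [midOf, e1]
      have hmidS₁' : midOf a m S₁' = midOf a m S' := by
        funext z
        by_cases h1 : z = h
        · have e1 : S₁' z = some ly := by rw [h1]; simp [hS₁'def, stepI, hly']
          have e0 : S' z = none := by rw [h1]; exact G'.1
          simp [midOf, e1, e0, hM]
        · by_cases h2 : z = y
          · have e1 : S₁' z = none := by rw [h2]; simp [hS₁'def, stepI, Ne.symm hne]
            have e0 : S' z = some ly := by rw [h2]; exact hly'
            simp [midOf, e1, e0, hM]
          · have e1 : S₁' z = S' z := by simp [hS₁'def, stepI, h1, h2]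
            simp [midOf, e1]
      have hmid₁ : ∀ s, shape (applySeq s (midOf a m S₁)) = shape (applySeq s (midOf a m S₁')) := by
        intro s; rw [hmidS₁, hmidS₁']; exact hmid s
      have huby : ubO y < k := lt_of_lt_of_le (ubO_lt hhy) hub
      have := ih (ubO y) huby S₁ S₁' y le_rfl G₁ G₁' hsh₁ hout₁ hmid₁
      rw [revSlideF_step hc, ← hydef, ← hS₁def, revSlideF_step hc', hpick', ← hS₁'def]
      exact this
  · have hc' : ¬ (candO S' h).Nonempty := fun hne => hc (hC ▸ hne)
    rw [revSlideF_empty hc, revSlideF_empty hc']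
    exact ⟨hsh, hout, G.2.2.2.1, G'.2.2.2.1, G.2.2.2.2, G'.2.2.2.2, hmid⟩

/-- The master invariant: equal shapes, equal outer parts, standard-like fillings,
and dual-equivalent middle parts. -/
def HRel (a m : ℕ) (P Q : Λ → Option ℕ) : Prop :=
  shape P = shape Q ∧ outOf a m P = outOf a m Q ∧ Inc P ∧ Inc Q ∧ InjL P ∧ InjL Q ∧
  ∀ s, shape (applySeq s (midOf a m P)) = shape (applySeq s (midOf a m Q))

lemma relStep (a m : ℕ) {P Q : Λ → Option ℕ} (R : HRel a m P Q) (p : Bool × Λ) :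
    HRel a m (if p.1 then jdt p.2 P else revjdt p.2 P)
      (if p.1 then jdt p.2 Q else revjdt p.2 Q) := by
  obtain ⟨hsh, hout, hIncP, hIncQ, hInjP, hInjQ, hmid⟩ := R
  obtain ⟨b, x⟩ := p
  cases b
  · simp only [Bool.false_eq_true, if_false]
    by_cases hadm : OuterAdmissible P x
    · have hadmQ := outerAdm_congr hsh hadm
      rw [revjdt_eq_revSlideF hadm, revjdt_eq_revSlideF hadmQ]
      have GP : SGoodO P x P x := ⟨hadm.1, le_rfl, fun z _ => rfl, hIncP, hInjP⟩
      have GQ : SGoodO Q x Q x := ⟨hadmQ.1, le_rfl, fun z _ => rfl, hIncQ, hInjQ⟩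
      exact pairSlideO a m P Q x hadm hadmQ (ubO x) P Q x le_rfl GP GQ hsh hout hmid
    · have hadmQ : ¬ OuterAdmissible Q x := fun hq => hadm (outerAdm_congr hsh.symm hq)
      rw [revjdt, if_neg hadm, revjdt, if_neg hadmQ]
      exact ⟨hsh, hout, hIncP, hIncQ, hInjP, hInjQ, hmid⟩
  · simp only [if_true]
    by_cases hadm : InnerAdmissible P x
    · have hadmQ := innerAdm_congr hsh hadm
      rw [jdt_eq_slideF hadm, jdt_eq_slideF hadmQ]
      have GP : SGoodI P x P x := ⟨hadm.1, le_rfl, fun z _ => rfl, hIncP, hInjP⟩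
      have GQ : SGoodI Q x Q x := ⟨hadmQ.1, le_rfl, fun z _ => rfl, hIncQ, hInjQ⟩
      exact pairSlideI a m P Q x hadm hadmQ (ubI x) P Q x le_rfl GP GQ hsh hout hmid
    · have hadmQ : ¬ InnerAdmissible Q x := fun hq => hadm (innerAdm_congr hsh.symm hq)
      rw [jdt, if_neg hadm, jdt, if_neg hadmQ]
      exact ⟨hsh, hout, hIncP, hIncQ, hInjP, hInjQ, hmid⟩

lemma relAll (a m : ℕ) : ∀ (s : List (Bool × Λ)) (P Q : Λ → Option ℕ),
    HRel a m P Q → HRel a m (applySeq s P) (applySeq s Q) := by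
  intro s
  induction s with
  | nil => intro P Q R; exact R
  | cons p s ihs =>
    intro P Q R
    rw [applySeq_cons, applySeq_cons]
    exact ihs _ _ (relStep a m R p)

lemma tabConcat_left {A B : Λ → Option ℕ} {x : Λ} {i : ℕ} (hA : A x = some i) :
    tabConcat A B x = some i := by simp [tabConcat, hA]

lemma tabConcat_right {A B : Λ → Option ℕ} {x : Λ} (hA : A x = none) :
    tabConcat A B x = (B x).map (· + (shape A).card) := by simp [tabConcat, hA]

lemma tabConcat_shape (A B : Λ → Option ℕ) : shape (tabConcat A B) = shape A ∪ shape B := by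
  ext x
  rw [mem_shape_iff, Finset.mem_union, mem_shape_iff, mem_shape_iff]
  cases hA : A x <;> cases hB : B x <;> simp [tabConcat, hA, hB]

theorem haiman_move' (lam mu nu : Finset Λ) (A T U B : Λ → Option ℕ)
    (hlam : IsLowerIdeal lam)
    (hmu : ShapeExtends mu lam) (hnu : ShapeExtends nu (lam ∪ mu))
    (hA : IsStandard A) (hT : IsStandard T) (hU : IsStandard U)
    (hB : IsStandard B)
    (hsA : shape A = lam) (hsT : shape T = mu) (hsU : shape U = mu)
    (hsB : shape B = nu)
    (h : DualEquiv T U) :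
    DualEquiv (tabConcat (tabConcat A T) B) (tabConcat (tabConcat A U) B) := by
  obtain ⟨hsh0, hseq⟩ := h
  set a := lam.card with hadef
  set m := mu.card with hmdef
  have hAnone : ∀ x, x ∉ lam → A x = none := fun x hx =>
    not_mem_shape_iff.mp (by rw [hsA]; exact hx)
  have hTnone : ∀ x, x ∉ mu → T x = none := fun x hx =>
    not_mem_shape_iff.mp (by rw [hsT]; exact hx)
  have hUnone : ∀ x, x ∉ mu → U x = none := fun x hx =>
    not_mem_shape_iff.mp (by rw [hsU]; exact hx)
  have hBnone : ∀ x, x ∉ nu → B x = none := fun x hx =>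
    not_mem_shape_iff.mp (by rw [hsB]; exact hx)
  have hAval : ∀ x ∈ lam, ∃ i, A x = some i ∧ 1 ≤ i ∧ i ≤ a := by
    intro x hx
    obtain ⟨i, hAx, h1, h2⟩ := hA.2.2.1 x (by rw [hsA]; exact hx)
    exact ⟨i, hAx, h1, by rwa [hsA] at h2⟩
  have hTval : ∀ x ∈ mu, ∃ t, T x = some t ∧ 1 ≤ t ∧ t ≤ m := by
    intro x hx
    obtain ⟨t, hTx, h1, h2⟩ := hT.2.2.1 x (by rw [hsT]; exact hx)
    exact ⟨t, hTx, h1, by rwa [hsT] at h2⟩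
  have hUval : ∀ x ∈ mu, ∃ t, U x = some t ∧ 1 ≤ t ∧ t ≤ m := by
    intro x hx
    obtain ⟨t, hUx, h1, h2⟩ := hU.2.2.1 x (by rw [hsU]; exact hx)
    exact ⟨t, hUx, h1, by rwa [hsU] at h2⟩
  have hBval : ∀ x ∈ nu, ∃ b, B x = some b ∧ 1 ≤ b ∧ b ≤ nu.card := by
    intro x hx
    obtain ⟨b, hBx, h1, h2⟩ := hB.2.2.1 x (by rw [hsB]; exact hx)
    exact ⟨b, hBx, h1, by rwa [hsB] at h2⟩
  have dLM : Disjoint lam mu := hmu.1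
  have dLMN : Disjoint (lam ∪ mu) nu := hnu.1
  have hcardA : (shape A).card = a := by rw [hsA]
  have hcardAT : (shape (tabConcat A T)).card = a + m := by
    rw [tabConcat_shape, hsA, hsT, Finset.card_union_of_disjoint dLM]
  have hcardAU : (shape (tabConcat A U)).card = a + m := by
    rw [tabConcat_shape, hsA, hsU, Finset.card_union_of_disjoint dLM]
  set X := tabConcat (tabConcat A T) B with hXdef
  set Y := tabConcat (tabConcat A U) B with hYdef
  -- value lemmas
  have hXlam : ∀ x ∈ lam, ∃ i, X x = some i ∧ A x = some i ∧ 1 ≤ i ∧ i ≤ a := by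
    intro x hx
    obtain ⟨i, hAx, h1, h2⟩ := hAval x hx
    exact ⟨i, tabConcat_left (tabConcat_left hAx), hAx, h1, h2⟩
  have hYlam : ∀ x ∈ lam, ∃ i, Y x = some i ∧ A x = some i ∧ 1 ≤ i ∧ i ≤ a := by
    intro x hx
    obtain ⟨i, hAx, h1, h2⟩ := hAval x hx
    exact ⟨i, tabConcat_left (tabConcat_left hAx), hAx, h1, h2⟩
  have hXmu : ∀ x ∈ mu, ∃ t, X x = some (t + a) ∧ T x = some t ∧ 1 ≤ t ∧ t ≤ m := by
    intro x hx
    obtain ⟨t, hTx, h1, h2⟩ := hTval x hx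
    have hAx := hAnone x (Finset.disjoint_right.mp dLM hx)
    refine ⟨t, tabConcat_left ?_, hTx, h1, h2⟩
    rw [tabConcat_right hAx, hTx, hcardA]; rfl
  have hYmu : ∀ x ∈ mu, ∃ t, Y x = some (t + a) ∧ U x = some t ∧ 1 ≤ t ∧ t ≤ m := by
    intro x hx
    obtain ⟨t, hUx, h1, h2⟩ := hUval x hx
    have hAx := hAnone x (Finset.disjoint_right.mp dLM hx)
    refine ⟨t, tabConcat_left ?_, hUx, h1, h2⟩
    rw [tabConcat_right hAx, hUx, hcardA]; rfl
  have hXnu : ∀ x ∈ nu, ∃ b, X x = some (b + (a + m)) ∧ B x = some b ∧ 1 ≤ b := by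
    intro x hx
    have hxl : x ∉ lam ∪ mu := Finset.disjoint_right.mp dLMN hx
    have hxlam : x ∉ lam := fun hc => hxl (Finset.mem_union_left _ hc)
    have hxmu : x ∉ mu := fun hc => hxl (Finset.mem_union_right _ hc)
    obtain ⟨b, hBx, h1, _⟩ := hBval x hx
    have hATx : tabConcat A T x = none := by
      rw [tabConcat_right (hAnone x hxlam), hTnone x hxmu]; rfl
    refine ⟨b, ?_, hBx, h1⟩
    rw [hXdef, tabConcat_right hATx, hBx, hcardAT]; rfl
  have hYnu : ∀ x ∈ nu, ∃ b, Y x = some (b + (a + m)) ∧ B x = some b ∧ 1 ≤ b := by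
    intro x hx
    have hxl : x ∉ lam ∪ mu := Finset.disjoint_right.mp dLMN hx
    have hxlam : x ∉ lam := fun hc => hxl (Finset.mem_union_left _ hc)
    have hxmu : x ∉ mu := fun hc => hxl (Finset.mem_union_right _ hc)
    obtain ⟨b, hBx, h1, _⟩ := hBval x hx
    have hAUx : tabConcat A U x = none := by
      rw [tabConcat_right (hAnone x hxlam), hUnone x hxmu]; rfl
    refine ⟨b, ?_, hBx, h1⟩
    rw [hYdef, tabConcat_right hAUx, hBx, hcardAU]; rfl
  have hXnone : ∀ x, x ∉ lam → x ∉ mu → x ∉ nu → X x = none := by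
    intro x h1 h2 h3
    have hATx : tabConcat A T x = none := by
      rw [tabConcat_right (hAnone x h1), hTnone x h2]; rfl
    rw [hXdef, tabConcat_right hATx, hBnone x h3]; rfl
  have hYnone : ∀ x, x ∉ lam → x ∉ mu → x ∉ nu → Y x = none := by
    intro x h1 h2 h3
    have hAUx : tabConcat A U x = none := by
      rw [tabConcat_right (hAnone x h1), hUnone x h2]; rfl
    rw [hYdef, tabConcat_right hAUx, hBnone x h3]; rfl
  -- membership classification
  have hmemX : ∀ x i, X x = some i →
      (x ∈ lam ∧ 1 ≤ i ∧ i ≤ a ∧ A x = some i) ∨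
      (x ∈ mu ∧ ∃ t, i = t + a ∧ T x = some t ∧ 1 ≤ t ∧ t ≤ m) ∨
      (x ∈ nu ∧ ∃ b, i = b + (a + m) ∧ B x = some b ∧ 1 ≤ b) := by
    intro x i hXx
    by_cases h1 : x ∈ lam
    · obtain ⟨i', hXx', hAx, hb1, hb2⟩ := hXlam x h1
      have : i = i' := by rw [hXx] at hXx'; exact Option.some_inj.mp hXx'
      subst this
      exact Or.inl ⟨h1, hb1, hb2, hAx⟩
    · by_cases h2 : x ∈ mu
      · obtain ⟨t, hXx', hTx, hb1, hb2⟩ := hXmu x h2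
        have : i = t + a := by rw [hXx] at hXx'; exact Option.some_inj.mp hXx'
        exact Or.inr (Or.inl ⟨h2, t, this, hTx, hb1, hb2⟩)
      · by_cases h3 : x ∈ nu
        · obtain ⟨b, hXx', hBx, hb1⟩ := hXnu x h3
          have : i = b + (a + m) := by rw [hXx] at hXx'; exact Option.some_inj.mp hXx'
          exact Or.inr (Or.inr ⟨h3, b, this, hBx, hb1⟩)
        · rw [hXnone x h1 h2 h3] at hXx; exact nomatch hXx
  have hmemY : ∀ x i, Y x = some i →
      (x ∈ lam ∧ 1 ≤ i ∧ i ≤ a ∧ A x = some i) ∨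
      (x ∈ mu ∧ ∃ t, i = t + a ∧ U x = some t ∧ 1 ≤ t ∧ t ≤ m) ∨
      (x ∈ nu ∧ ∃ b, i = b + (a + m) ∧ B x = some b ∧ 1 ≤ b) := by
    intro x i hYx
    by_cases h1 : x ∈ lam
    · obtain ⟨i', hYx', hAx, hb1, hb2⟩ := hYlam x h1
      have : i = i' := by rw [hYx] at hYx'; exact Option.some_inj.mp hYx'
      subst this
      exact Or.inl ⟨h1, hb1, hb2, hAx⟩
    · by_cases h2 : x ∈ mu
      · obtain ⟨t, hYx', hUx, hb1, hb2⟩ := hYmu x h2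
        have : i = t + a := by rw [hYx] at hYx'; exact Option.some_inj.mp hYx'
        exact Or.inr (Or.inl ⟨h2, t, this, hUx, hb1, hb2⟩)
      · by_cases h3 : x ∈ nu
        · obtain ⟨b, hYx', hBx, hb1⟩ := hYnu x h3
          have : i = b + (a + m) := by rw [hYx] at hYx'; exact Option.some_inj.mp hYx'
          exact Or.inr (Or.inr ⟨h3, b, this, hBx, hb1⟩)
        · rw [hYnone x h1 h2 h3] at hYx; exact nomatch hYx
  -- not-below facts
  have hNotMuLam : ∀ x ∈ mu, ∀ y ∈ lam, ¬ x < y := by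
    intro x hx y hy hlt
    have := hmu.2.2.2 x hx y (Finset.mem_union_left _ hy) (le_of_lt hlt)
    exact Finset.disjoint_left.mp dLM hy this
  have hNotNu : ∀ x ∈ nu, ∀ y ∈ lam ∪ mu, ¬ x < y := by
    intro x hx y hy hlt
    have := hnu.2.2.2 x hx y (Finset.mem_union_left _ hy) (le_of_lt hlt)
    exact Finset.disjoint_left.mp dLMN hy this
  -- Inc X
  have hIncX : Inc X := by
    intro x y i j hxy hXx hXy
    rcases hmemX x i hXx with ⟨hx, hi1, hi2, hAx⟩ | ⟨hx, t, rfl, hTx, ht1, ht2⟩ | ⟨hx, b, rfl, hBx, hb1⟩ <;>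
      rcases hmemX y j hXy with ⟨hy, hj1, hj2, hAy⟩ | ⟨hy, u, rfl, hUy, hu1, hu2⟩ | ⟨hy, c, rfl, hBy, hc1⟩
    · exact hA.2.2.2 x y (by rw [hsA]; exact hx) (by rw [hsA]; exact hy) hxy i j hAx hAy
    · omega
    · omega
    · exact absurd hxy (hNotMuLam x hx y hy)
    · have := hT.2.2.2 x y (by rw [hsT]; exact hx) (by rw [hsT]; exact hy) hxy t u hTx hUy
      omega
    · omega
    · exact absurd hxy (hNotNu x hx y (Finset.mem_union_left _ hy))
    · exact absurd hxy (hNotNu x hx y (Finset.mem_union_right _ hy))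
    · have := hB.2.2.2 x y (by rw [hsB]; exact hx) (by rw [hsB]; exact hy) hxy b c hBx hBy
      omega
  have hIncY : Inc Y := by
    intro x y i j hxy hYx hYy
    rcases hmemY x i hYx with ⟨hx, hi1, hi2, hAx⟩ | ⟨hx, t, rfl, hTx, ht1, ht2⟩ | ⟨hx, b, rfl, hBx, hb1⟩ <;>
      rcases hmemY y j hYy with ⟨hy, hj1, hj2, hAy⟩ | ⟨hy, u, rfl, hUy, hu1, hu2⟩ | ⟨hy, c, rfl, hBy, hc1⟩
    · exact hA.2.2.2 x y (by rw [hsA]; exact hx) (by rw [hsA]; exact hy) hxy i j hAx hAy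
    · omega
    · omega
    · exact absurd hxy (hNotMuLam x hx y hy)
    · have := hU.2.2.2 x y (by rw [hsU]; exact hx) (by rw [hsU]; exact hy) hxy t u hTx hUy
      omega
    · omega
    · exact absurd hxy (hNotNu x hx y (Finset.mem_union_left _ hy))
    · exact absurd hxy (hNotNu x hx y (Finset.mem_union_right _ hy))
    · have := hB.2.2.2 x y (by rw [hsB]; exact hx) (by rw [hsB]; exact hy) hxy b c hBx hBy
      omega
  -- InjL X
  have hInjX : InjL X := by
    intro x y i hXx hXy
    rcases hmemX x i hXx with ⟨hx, hi1, hi2, hAx⟩ | ⟨hx, t, ht, hTx, ht1, ht2⟩ | ⟨hx, b, hb, hBx, hb1⟩ <;>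
      rcases hmemX y i hXy with ⟨hy, hj1, hj2, hAy⟩ | ⟨hy, u, hu, hUy, hu1, hu2⟩ | ⟨hy, c, hc, hBy, hc1⟩
    · obtain ⟨z, hz, huniq⟩ := hA.2.1 i hi1 (by rw [hsA]; exact hi2)
      exact (huniq x hAx).trans (huniq y hAy).symm
    · omega
    · omega
    · omega
    · have htu : t = u := by omega
      subst htu
      obtain ⟨z, hz, huniq⟩ := hT.2.1 t ht1 (by rw [hsT]; exact ht2)
      exact (huniq x hTx).trans (huniq y hUy).symm
    · omega
    · omega
    · omega
    · have hbc : b = c := by omega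
      subst hbc
      have hble : b ≤ nu.card := by
        obtain ⟨b1, hBx1, _, hb2'⟩ := hBval x hx
        have : b = b1 := by rw [hBx] at hBx1; exact Option.some_inj.mp hBx1
        omega
      obtain ⟨z, hz, huniq⟩ := hB.2.1 b hb1 (by rw [hsB]; exact hble)
      exact (huniq x hBx).trans (huniq y hBy).symm
  have hInjY : InjL Y := by
    intro x y i hYx hYy
    rcases hmemY x i hYx with ⟨hx, hi1, hi2, hAx⟩ | ⟨hx, t, ht, hTx, ht1, ht2⟩ | ⟨hx, b, hb, hBx, hb1⟩ <;>
      rcases hmemY y i hYy with ⟨hy, hj1, hj2, hAy⟩ | ⟨hy, u, hu, hUy, hu1, hu2⟩ | ⟨hy, c, hc, hBy, hc1⟩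
    · obtain ⟨z, hz, huniq⟩ := hA.2.1 i hi1 (by rw [hsA]; exact hi2)
      exact (huniq x hAx).trans (huniq y hAy).symm
    · omega
    · omega
    · omega
    · have htu : t = u := by omega
      subst htu
      obtain ⟨z, hz, huniq⟩ := hU.2.1 t ht1 (by rw [hsU]; exact ht2)
      exact (huniq x hTx).trans (huniq y hUy).symm
    · omega
    · omega
    · omega
    · have hbc : b = c := by omega
      subst hbc
      have hble : b ≤ nu.card := by
        obtain ⟨b1, hBx1, _, hb2'⟩ := hBval x hx
        have : b = b1 := by rw [hBx] at hBx1; exact Option.some_inj.mp hBx1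
        omega
      obtain ⟨z, hz, huniq⟩ := hB.2.1 b hb1 (by rw [hsB]; exact hble)
      exact (huniq x hBx).trans (huniq y hBy).symm
  -- shapes
  have hshX : shape X = (lam ∪ mu) ∪ nu := by
    rw [hXdef, tabConcat_shape, tabConcat_shape, hsA, hsT, hsB]
  have hshY : shape Y = (lam ∪ mu) ∪ nu := by
    rw [hYdef, tabConcat_shape, tabConcat_shape, hsA, hsU, hsB]
  -- outer parts
  have houtXY : outOf a m X = outOf a m Y := by
    funext x
    by_cases h1 : x ∈ lam
    · obtain ⟨i, hXx, hAx, hb1, hb2⟩ := hXlam x h1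
      obtain ⟨i', hYx, hAx', hb1', hb2'⟩ := hYlam x h1
      have hii : i' = i := by rw [hAx] at hAx'; exact (Option.some_inj.mp hAx').symm
      rw [hii] at hYx
      simp [outOf, hXx, hYx, show ¬(a < i ∧ i ≤ a + m) by omega]
    · by_cases h2 : x ∈ mu
      · obtain ⟨t, hXx, _, hb1, hb2⟩ := hXmu x h2
        obtain ⟨u, hYx, _, hb1', hb2'⟩ := hYmu x h2
        simp [outOf, hXx, hYx, show a < t + a ∧ t + a ≤ a + m by omega,
          show a < u + a ∧ u + a ≤ a + m by omega]
      · by_cases h3 : x ∈ nu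
        · obtain ⟨b, hXx, hBx, hb1⟩ := hXnu x h3
          obtain ⟨c, hYx, hBx', hc1⟩ := hYnu x h3
          have hcb : c = b := by rw [hBx] at hBx'; exact (Option.some_inj.mp hBx').symm
          rw [hcb] at hYx
          simp [outOf, hXx, hYx, show ¬(b + (a + m) ≤ a + m) by omega]
        · simp [outOf, hXnone x h1 h2 h3, hYnone x h1 h2 h3]
  -- middle parts
  have hmidX : midOf a m X = T := by
    funext x
    by_cases h1 : x ∈ lam
    · obtain ⟨i, hXx, _, hb1, hb2⟩ := hXlam x h1
      rw [hTnone x (Finset.disjoint_left.mp dLM h1)]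
      simp [midOf, hXx, show ¬(a < i ∧ i ≤ a + m) by omega]
    · by_cases h2 : x ∈ mu
      · obtain ⟨t, hXx, hTx, hb1, hb2⟩ := hXmu x h2
        rw [hTx]
        simp [midOf, hXx, show a < t + a ∧ t + a ≤ a + m by omega]
      · by_cases h3 : x ∈ nu
        · obtain ⟨b, hXx, _, hb1⟩ := hXnu x h3
          rw [hTnone x h2]
          simp [midOf, hXx, show ¬(b + (a + m) ≤ a + m) by omega]
        · simp [midOf, hXnone x h1 h2 h3, hTnone x h2]
  have hmidY : midOf a m Y = U := by
    funext x
    by_cases h1 : x ∈ lam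
    · obtain ⟨i, hYx, _, hb1, hb2⟩ := hYlam x h1
      rw [hUnone x (Finset.disjoint_left.mp dLM h1)]
      simp [midOf, hYx, show ¬(a < i ∧ i ≤ a + m) by omega]
    · by_cases h2 : x ∈ mu
      · obtain ⟨t, hYx, hUx, hb1, hb2⟩ := hYmu x h2
        rw [hUx]
        simp [midOf, hYx, show a < t + a ∧ t + a ≤ a + m by omega]
      · by_cases h3 : x ∈ nu
        · obtain ⟨b, hYx, _, hb1⟩ := hYnu x h3
          rw [hUnone x h2]
          simp [midOf, hYx, show ¬(b + (a + m) ≤ a + m) by omega]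
        · simp [midOf, hYnone x h1 h2 h3, hUnone x h2]
  have hRel : HRel a m X Y := by
    refine ⟨hshX.trans hshY.symm, houtXY, hIncX, hIncY, hInjX, hInjY, ?_⟩
    intro s
    rw [hmidX, hmidY]
    exact hseq s
  exact ⟨hRel.1, fun s => (relAll a m s X Y hRel).1⟩

end


/-- Haiman move compatibility. -/
theorem haiman_move {Λ : Type} [Fintype Λ] [PartialOrder Λ]
    (lam mu nu : Finset Λ) (A T U B : Λ → Option ℕ)
    (hlam : IsLowerIdeal lam)
    (hmu : ShapeExtends mu lam) (hnu : ShapeExtends nu (lam ∪ mu))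
    (hA : IsStandard A) (hT : IsStandard T) (hU : IsStandard U)
    (hB : IsStandard B)
    (hsA : shape A = lam) (hsT : shape T = mu) (hsU : shape U = mu)
    (hsB : shape B = nu)
    (h : DualEquiv T U) :
    DualEquiv (tabConcat (tabConcat A T) B) (tabConcat (tabConcat A U) B) :=
  haiman_move' lam mu nu A T U B hlam hmu hnu hA hT hU hB hsA hsT hsU hsB h
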